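/- arXiv:1406.2964 — 13 statements merged into one kernel-verified Lean document; each statement's English description precedes it below -/
import Mathlib

section
/- Let p be a prime and let V and W be vector spaces over 𝔽_p. Let V_A and V_C be subspaces of V with V_A ⊔ V_C = V (the subspaces together span V), and let V_B = V_A ⊓ V_C. Suppose β_A : V_A × V_A → W and β_C : V_C × V_C → W are alternating bilinear maps that agree on V_B × V_B. Then there exists an alternating bilinear map β_D : V × V → W whose restriction to V_A × V_A is β_A and whose restriction to V_C × V_C is β_C. (This is the amalgamation property for the category 𝔹(n) of alternating bilinear maps into a fixed target.) -/
/-- Amalgamation property for alternating bilinear maps into a fixed target: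
two alternating bilinear maps on subspaces `V_A`, `V_C` spanning `V`, which agree
on `V_B = V_A ⊓ V_C`, have a common alternating bilinear extension to all of `V`. -/
theorem bilinear_amalgamation (p : ℕ) (hp : p.Prime)
    (V W : Type) [AddCommGroup V] [Module (ZMod p) V]
    [AddCommGroup W] [Module (ZMod p) W]
    (V_A V_C : Submodule (ZMod p) V) (hsup : V_A ⊔ V_C = ⊤)
    (β_A : V_A →ₗ[ZMod p] V_A →ₗ[ZMod p] W)
    (β_C : V_C →ₗ[ZMod p] V_C →ₗ[ZMod p] W)
    (hAalt : ∀ x : V_A, β_A x x = 0)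
    (hCalt : ∀ x : V_C, β_C x x = 0)
    (hagree : ∀ (x y : V) (hxA : x ∈ V_A) (hxC : x ∈ V_C) (hyA : y ∈ V_A) (hyC : y ∈ V_C),
      β_A ⟨x, hxA⟩ ⟨y, hyA⟩ = β_C ⟨x, hxC⟩ ⟨y, hyC⟩) :
    ∃ β_D : V →ₗ[ZMod p] V →ₗ[ZMod p] W,
      (∀ x : V, β_D x x = 0) ∧
      (∀ (x y : V) (hx : x ∈ V_A) (hy : y ∈ V_A), β_D x y = β_A ⟨x, hx⟩ ⟨y, hy⟩) ∧
      (∀ (x y : V) (hx : x ∈ V_C) (hy : y ∈ V_C), β_D x y = β_C ⟨x, hx⟩ ⟨y, hy⟩) := by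
  haveI : Fact p.Prime := ⟨hp⟩
  classical
  -- complement of B = V_A ⊓ V_C inside V_C, and inside V_A
  obtain ⟨C', hC'⟩ := Submodule.exists_isCompl (V_A.comap V_C.subtype)
  obtain ⟨A', hA'⟩ := Submodule.exists_isCompl (V_C.comap V_A.subtype)
  set C'' : Submodule (ZMod p) V := C'.map V_C.subtype with hC''def
  have hcompl : IsCompl V_A C'' := by
    constructor
    · rw [Submodule.disjoint_def]
      intro x hxA hxC''
      obtain ⟨c, hc, rfl⟩ := hxC''
      have hmem : c ∈ V_A.comap V_C.subtype := hxA
      have := (Submodule.disjoint_def.mp hC'.disjoint) c hmem hc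
      simp [this]
    · rw [codisjoint_iff, eq_top_iff, ← hsup]
      apply sup_le (le_sup_left)
      intro x hx
      have hx' : (⟨x, hx⟩ : V_C) ∈ (V_A.comap V_C.subtype) ⊔ C' := by
        rw [codisjoint_iff.mp hC'.codisjoint]; trivial
      obtain ⟨b, hb, c, hc, hbc⟩ := Submodule.mem_sup.mp hx'
      have : x = (b : V) + (c : V) := by
        have := congrArg (Subtype.val) hbc; simpa using this.symm
      rw [this]
      exact Submodule.add_mem _ (Submodule.mem_sup_left hb)
        (Submodule.mem_sup_right ⟨c, hc, rfl⟩)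
  set πA : V →ₗ[ZMod p] V_A := V_A.linearProjOfIsCompl C'' hcompl with hπA
  set πC : V →ₗ[ZMod p] C'' := C''.linearProjOfIsCompl V_A hcompl.symm with hπC
  set πB : V_A →ₗ[ZMod p] (V_C.comap V_A.subtype) :=
    (V_C.comap V_A.subtype).linearProjOfIsCompl A' hA' with hπB
  set ιB : (V_C.comap V_A.subtype) →ₗ[ZMod p] V_C :=
    LinearMap.codRestrict V_C (V_A.subtype.comp (V_C.comap V_A.subtype).subtype)
      (fun b => b.2) with hιB
  set ιC : C'' →ₗ[ZMod p] V_C :=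
    LinearMap.codRestrict V_C C''.subtype
      (fun c => Submodule.map_subtype_le V_C C' c.2) with hιC
  set b : V →ₗ[ZMod p] V_C := ιB ∘ₗ πB ∘ₗ πA with hb
  set c : V →ₗ[ZMod p] V_C := ιC ∘ₗ πC with hc
  -- key coercion facts
  have hsum : ∀ x : V, ((πA x : V) + (πC x : V)) = x := fun x =>
    Submodule.projection_add_projection_eq_self hcompl x
  have hbval : ∀ x : V, ((b x : V)) = ((πB (πA x) : V_A) : V) := fun x => rfl
  have hcval : ∀ x : V, ((c x : V)) = ((πC x : C'') : V) := fun x => rfl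
  -- antisymmetry of β_C
  have hanti : ∀ u v : V_C, β_C u v = - β_C v u := by
    intro u v
    have h0 := hCalt (u + v)
    simp only [map_add, LinearMap.add_apply, hCalt] at h0
    rw [eq_neg_iff_add_eq_zero, add_comm]
    simpa using h0
  -- on V_A : πA is identity, πC is zero
  have hA_pA : ∀ (x : V) (hx : x ∈ V_A), πA x = ⟨x, hx⟩ := fun x hx =>
    Submodule.linearProjOfIsCompl_apply_left hcompl ⟨x, hx⟩
  have hA_pC : ∀ (x : V) (hx : x ∈ V_A), πC x = 0 := fun x hx =>
    Submodule.projectionOnto_apply_of_mem_right hcompl.symm hx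
  -- on V_C : b x + c x = x
  have hC_b : ∀ (x : V) (hx : x ∈ V_C), (b x : V) + (c x : V) = x := by
    intro x hx
    rw [hbval, hcval]
    have hπAxC : ((πA x : V_A) : V) ∈ V_C := by
      have : ((πA x : V_A) : V) = x - ((πC x : C'') : V) := by
        rw [eq_sub_iff_add_eq]; exact hsum x
      rw [this]
      exact Submodule.sub_mem _ hx (Submodule.map_subtype_le V_C C' (πC x).2)
    have : πB (πA x) = ⟨πA x, hπAxC⟩ :=
      Submodule.linearProjOfIsCompl_apply_left hA' ⟨πA x, hπAxC⟩
    rw [this]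
    exact hsum x
  refine ⟨β_A.compl₁₂ πA πA + β_C.compl₁₂ (b + c) c + β_C.compl₁₂ c b, ?_, ?_, ?_⟩
  · intro x
    simp only [LinearMap.add_apply, LinearMap.compl₁₂_apply, hAalt, zero_add, map_add,
      LinearMap.add_apply]
    rw [hCalt (c x), hanti (b x) (c x)]
    abel
  · intro x y hx hy
    simp only [LinearMap.add_apply, LinearMap.compl₁₂_apply, hA_pA x hx, hA_pA y hy]
    have hcx : c x = 0 := by rw [hc]; simp [hA_pC x hx]
    have hcy : c y = 0 := by rw [hc]; simp [hA_pC y hy]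
    simp [hcx, hcy]
  · intro x y hx hy
    simp only [LinearMap.add_apply, LinearMap.compl₁₂_apply]
    have hπAxC : ((πA x : V_A) : V) ∈ V_C := by
      have : ((πA x : V_A) : V) = x - ((πC x : C'') : V) := by
        rw [eq_sub_iff_add_eq]; exact hsum x
      rw [this]
      exact Submodule.sub_mem _ hx (Submodule.map_subtype_le V_C C' (πC x).2)
    have hπAyC : ((πA y : V_A) : V) ∈ V_C := by
      have : ((πA y : V_A) : V) = y - ((πC y : C'') : V) := by
        rw [eq_sub_iff_add_eq]; exact hsum y
      rw [this]
      exact Submodule.sub_mem _ hy (Submodule.map_subtype_le V_C C' (πC y).2)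
    have h1x : πB (πA x) = ⟨πA x, hπAxC⟩ :=
      Submodule.linearProjOfIsCompl_apply_left hA' ⟨πA x, hπAxC⟩
    have h1y : πB (πA y) = ⟨πA y, hπAyC⟩ :=
      Submodule.linearProjOfIsCompl_apply_left hA' ⟨πA y, hπAyC⟩
    have hbx : b x = ⟨(πA x : V), hπAxC⟩ := by apply Subtype.ext; rw [hbval, h1x]
    have hby : b y = ⟨(πA y : V), hπAyC⟩ := by apply Subtype.ext; rw [hbval, h1y]
    have hagr : β_A (πA x) (πA y) = β_C (b x) (b y) := by
      rw [hbx, hby]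
      exact hagree _ _ (πA x).2 hπAxC (πA y).2 hπAyC
    have hxeq : (⟨x, hx⟩ : V_C) = b x + c x := by
      apply Subtype.ext; exact (hC_b x hx).symm
    have hyeq : (⟨y, hy⟩ : V_C) = b y + c y := by
      apply Subtype.ext; exact (hC_b y hy).symm
    rw [hagr, hxeq, hyeq]
    simp only [map_add, LinearMap.add_apply]
    abel
end

section
/- Let p be a prime and let V and W be vector spaces over 𝔽_p. Let V_A, V_C be subspaces of V with V_A ⊔ V_C = V and V_B = V_A ⊓ V_C. Suppose β_A and β_C are alternating bilinear maps on V_A and V_C respectively, agreeing on V_B. Let X be a linearly independent family in V_A with V_A = V_B ⊕ span(X), let Y be a linearly independent family in V_C with V_C = V_B ⊕ span(Y), and let φ : X × Y → W be an arbitrary function. Then there exists an alternating bilinear map β_D : V × V → W restricting to β_A on V_A and to β_C on V_C and satisfying β_D(x,y) = φ(x,y) for every x ∈ X and y ∈ Y. -/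
set_option maxHeartbeats 1000000 in
/-- Amalgamation of alternating bilinear maps with prescribed values on a pair of
bases: given alternating bilinear maps on `V_A` and `V_C` agreeing on `V_B = V_A ⊓ V_C`,
a basis `X` of a complement of `V_B` in `V_A`, a basis `Y` of a complement of `V_B`
in `V_C`, and an arbitrary function `φ : X × Y → W`, there is a common alternating
bilinear extension `β_D` to `V = V_A ⊔ V_C` with `β_D(x,y) = φ(x,y)` for `x ∈ X`, `y ∈ Y`. -/
theorem bilinear_amalgamation_prescribed (p : ℕ) (hp : p.Prime)
    (V W : Type) [AddCommGroup V] [Module (ZMod p) V]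
    [AddCommGroup W] [Module (ZMod p) W]
    (V_A V_C : Submodule (ZMod p) V) (hsup : V_A ⊔ V_C = ⊤)
    (V_B : Submodule (ZMod p) V) (hVB : V_B = V_A ⊓ V_C)
    (β_A : V_A →ₗ[ZMod p] V_A →ₗ[ZMod p] W)
    (β_C : V_C →ₗ[ZMod p] V_C →ₗ[ZMod p] W)
    (hAalt : ∀ x : V_A, β_A x x = 0)
    (hCalt : ∀ x : V_C, β_C x x = 0)
    (hagree : ∀ (x y : V) (hxA : x ∈ V_A) (hxC : x ∈ V_C) (hyA : y ∈ V_A) (hyC : y ∈ V_C),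
      β_A ⟨x, hxA⟩ ⟨y, hyA⟩ = β_C ⟨x, hxC⟩ ⟨y, hyC⟩)
    (X Y : Set V)
    (hXA : X ⊆ (V_A : Set V)) (hYC : Y ⊆ (V_C : Set V))
    (hXli : LinearIndependent (ZMod p) ((↑) : X → V))
    (hYli : LinearIndependent (ZMod p) ((↑) : Y → V))
    (hXcompl : Disjoint V_B (Submodule.span (ZMod p) X) ∧
      V_B ⊔ Submodule.span (ZMod p) X = V_A)
    (hYcompl : Disjoint V_B (Submodule.span (ZMod p) Y) ∧
      V_B ⊔ Submodule.span (ZMod p) Y = V_C)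
    (φ : X → Y → W) :
    ∃ β_D : V →ₗ[ZMod p] V →ₗ[ZMod p] W,
      (∀ x : V, β_D x x = 0) ∧
      (∀ (x y : V) (hx : x ∈ V_A) (hy : y ∈ V_A), β_D x y = β_A ⟨x, hx⟩ ⟨y, hy⟩) ∧
      (∀ (x y : V) (hx : x ∈ V_C) (hy : y ∈ V_C), β_D x y = β_C ⟨x, hx⟩ ⟨y, hy⟩) ∧
      (∀ (x : X) (y : Y), β_D (x : V) (y : V) = φ x y) := by
  set sX := Submodule.span (ZMod p) X with hsX
  set sY := Submodule.span (ZMod p) Y with hsY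
  have hBA : V_B ≤ V_A := hVB ▸ inf_le_left
  have hBC : V_B ≤ V_C := hVB ▸ inf_le_right
  have hXA' : sX ≤ V_A := hXcompl.2 ▸ le_sup_right
  have hYC' : sY ≤ V_C := hYcompl.2 ▸ le_sup_right
  -- complement structure
  have hdisjAY : Disjoint V_A sY := by
    rw [disjoint_iff_inf_le]
    intro v hv
    have hvB : v ∈ V_B := hVB ▸ ⟨hv.1, hYC' hv.2⟩
    have := Submodule.disjoint_def.mp hYcompl.1 v hvB hv.2
    simp [this]
  have hsupAY : V_A ⊔ sY = ⊤ := by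
    rw [← top_le_iff, ← hsup]
    exact sup_le le_sup_left (hYcompl.2 ▸ sup_le (le_trans hBA le_sup_left) le_sup_right)
  have hcY : IsCompl sY V_A := ⟨hdisjAY.symm, codisjoint_iff.mpr (by rw [sup_comm]; exact hsupAY)⟩
  have hcB : IsCompl V_B (sX ⊔ sY) := by
    constructor
    · rw [disjoint_iff_inf_le]
      intro v hv
      obtain ⟨x, hx, y, hy, hxy⟩ := Submodule.mem_sup.mp hv.2
      have hb : v ∈ V_B := hv.1
      have hyA : y ∈ V_A := by
        have : y = v - x := by rw [← hxy]; abel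
        rw [this]; exact Submodule.sub_mem _ (hBA hb) (hXA' hx)
      have hyB : y ∈ V_B := hVB ▸ ⟨hyA, hYC' hy⟩
      have hy0 : y = 0 := Submodule.disjoint_def.mp hYcompl.1 y hyB hy
      have hvx : v = x := by rw [← hxy, hy0, add_zero]
      have : v = 0 := Submodule.disjoint_def.mp hXcompl.1 v hb (hvx ▸ hx)
      simp [this]
    · rw [codisjoint_iff, ← sup_assoc, hXcompl.2, hsupAY]
  have hcX : IsCompl sX (V_B ⊔ sY) := by
    constructor
    · rw [disjoint_iff_inf_le]
      intro v hv
      obtain ⟨b, hb, y, hy, hby⟩ := Submodule.mem_sup.mp hv.2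
      have hyA : y ∈ V_A := by
        have : y = v - b := by rw [← hby]; abel
        rw [this]; exact Submodule.sub_mem _ (hXA' hv.1) (hBA hb)
      have hyB : y ∈ V_B := hVB ▸ ⟨hyA, hYC' hy⟩
      have hy0 : y = 0 := Submodule.disjoint_def.mp hYcompl.1 y hyB hy
      have hvb : v ∈ V_B := by rw [← hby, hy0, add_zero]; exact hb
      have : v = 0 := Submodule.disjoint_def.mp hXcompl.1 v hvb hv.1
      simp [this]
    · rw [codisjoint_iff, sup_comm, sup_assoc, sup_comm sY sX, ← sup_assoc, hXcompl.2, hsupAY]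
  set πB := Submodule.projectionOnto V_B (sX ⊔ sY) hcB with hπB
  set πX := Submodule.projectionOnto sX (V_B ⊔ sY) hcX with hπX
  set πY := Submodule.projectionOnto sY V_A hcY with hπY
  -- the decomposition identity
  have hdec : ∀ v : V, ((πB v : V) + πX v + πY v = v) := by
    intro v
    obtain ⟨b, hb, w, hw, hbw⟩ := Submodule.mem_sup.mp
      (by rw [codisjoint_iff.mp hcB.2]; exact Submodule.mem_top : v ∈ V_B ⊔ (sX ⊔ sY))
    obtain ⟨x, hx, y, hy, hxy⟩ := Submodule.mem_sup.mp hw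
    have hv : v = b + x + y := by rw [← hbw, ← hxy, add_assoc]
    have e1 : πB v = ⟨b, hb⟩ := by
      rw [hv]
      simp only [map_add]
      rw [show πB b = ⟨b,hb⟩ from Submodule.projectionOnto_apply_left hcB ⟨b,hb⟩,
        Submodule.projectionOnto_apply_of_mem_right hcB (x := x) (Submodule.mem_sup_left hx),
        Submodule.projectionOnto_apply_of_mem_right hcB (x := y) (Submodule.mem_sup_right hy)]
      simp
    have e2 : πX v = ⟨x, hx⟩ := by
      rw [hv]
      simp only [map_add]
      rw [show πX x = ⟨x,hx⟩ from Submodule.projectionOnto_apply_left hcX ⟨x,hx⟩,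
        Submodule.projectionOnto_apply_of_mem_right hcX (x := b) (Submodule.mem_sup_left hb),
        Submodule.projectionOnto_apply_of_mem_right hcX (x := y) (Submodule.mem_sup_right hy)]
      simp
    have e3 : πY v = ⟨y, hy⟩ := by
      rw [hv]
      simp only [map_add]
      rw [show πY y = ⟨y,hy⟩ from Submodule.projectionOnto_apply_left hcY ⟨y,hy⟩,
        Submodule.projectionOnto_apply_of_mem_right hcY (x := b) (hBA hb),
        Submodule.projectionOnto_apply_of_mem_right hcY (x := x) (hXA' hx)]
      simp
    rw [e1, e2, e3, ← hv]
  -- the bilinear extension of φ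
  have eX : Submodule.span (ZMod p) (Set.range ((↑) : X → V)) = sX := by
    rw [Subtype.range_coe]
  have eY : Submodule.span (ZMod p) (Set.range ((↑) : Y → V)) = sY := by
    rw [Subtype.range_coe]
  let bX : Module.Basis X (ZMod p) sX := (Module.Basis.span hXli).map (LinearEquiv.ofEq _ _ eX)
  let bY : Module.Basis Y (ZMod p) sY := (Module.Basis.span hYli).map (LinearEquiv.ofEq _ _ eY)
  have hbX : ∀ x : X, (bX x : V) = x := by
    intro x; simp [bX, Module.Basis.span_apply]
  have hbY : ∀ y : Y, (bY y : V) = y := by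
    intro y; simp [bY, Module.Basis.span_apply]
  set Φ : sX →ₗ[ZMod p] sY →ₗ[ZMod p] W :=
    bX.constr (ZMod p) (fun x => bY.constr (ZMod p) (fun y => φ x y)) with hΦ
  have hΦapp : ∀ (x : X) (y : Y) (hx : (x:V) ∈ sX) (hy : (y:V) ∈ sY),
      Φ ⟨x, hx⟩ ⟨y, hy⟩ = φ x y := by
    intro x y hx hy
    have h1 : (⟨(x:V), hx⟩ : sX) = bX x := Subtype.ext (hbX x).symm
    have h2 : (⟨(y:V), hy⟩ : sY) = bY y := Subtype.ext (hbY y).symm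
    rw [h1, h2, hΦ, Module.Basis.constr_basis, Module.Basis.constr_basis]
  -- the component maps
  set iBA : V_B →ₗ[ZMod p] V_A := Submodule.inclusion hBA with hiBA
  set iXA : sX →ₗ[ZMod p] V_A := Submodule.inclusion hXA' with hiXA
  set iBC : V_B →ₗ[ZMod p] V_C := Submodule.inclusion hBC with hiBC
  set iYC : sY →ₗ[ZMod p] V_C := Submodule.inclusion hYC' with hiYC
  set a : V →ₗ[ZMod p] V_A := iBA ∘ₗ πB + iXA ∘ₗ πX with ha
  set c : V →ₗ[ZMod p] V_C := iBC ∘ₗ πB + iYC ∘ₗ πY with hc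
  set ab : V →ₗ[ZMod p] V_A := iBA ∘ₗ πB with hab
  set F : V →ₗ[ZMod p] V →ₗ[ZMod p] W := Φ.compl₁₂ πX πY with hF
  refine ⟨β_A.compl₁₂ a a + β_C.compl₁₂ c c - β_A.compl₁₂ ab ab + F - F.flip, ?_, ?_, ?_, ?_⟩
  · intro v
    simp [LinearMap.compl₁₂_apply, hAalt, hCalt]
  · intro u v hu hv
    have hYu : πY u = 0 := Submodule.projectionOnto_apply_of_mem_right hcY (x := u) hu
    have hYv : πY v = 0 := Submodule.projectionOnto_apply_of_mem_right hcY (x := v) hv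
    have hau : a u = ⟨u, hu⟩ := by
      apply Subtype.ext
      have := hdec u
      rw [hYu] at this
      simpa [ha, hab, hiBA, hiXA, Submodule.coe_inclusion] using this
    have hav : a v = ⟨v, hv⟩ := by
      apply Subtype.ext
      have := hdec v
      rw [hYv] at this
      simpa [ha, hab, hiBA, hiXA, Submodule.coe_inclusion] using this
    have hcancel : β_C (c u) (c v) = β_A (ab u) (ab v) := by
      rw [hc, hab]
      simp only [LinearMap.add_apply, LinearMap.comp_apply, hYu, hYv, map_zero, add_zero]
      exact (hagree (πB u) (πB v) (hBA (πB u).2) (hBC (πB u).2) (hBA (πB v).2)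
        (hBC (πB v).2)).symm
    simp only [LinearMap.sub_apply, LinearMap.add_apply, LinearMap.compl₁₂_apply,
      LinearMap.flip_apply, hF, hau, hav, hcancel, hYu, hYv, map_zero, LinearMap.zero_apply]
    abel
  · intro u v hu hv
    have hXu : πX u = 0 := Submodule.projectionOnto_apply_of_mem_right hcX (x := u)
      (by rw [← hYcompl.2] at hu; exact hu)
    have hXv : πX v = 0 := Submodule.projectionOnto_apply_of_mem_right hcX (x := v)
      (by rw [← hYcompl.2] at hv; exact hv)
    have hcu : c u = ⟨u, hu⟩ := by
      apply Subtype.ext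
      have := hdec u
      rw [hXu] at this
      simpa [hc, hiBC, hiYC, Submodule.coe_inclusion] using this
    have hcv : c v = ⟨v, hv⟩ := by
      apply Subtype.ext
      have := hdec v
      rw [hXv] at this
      simpa [hc, hiBC, hiYC, Submodule.coe_inclusion] using this
    have hcancel : β_A (a u) (a v) = β_A (ab u) (ab v) := by
      rw [ha, hab]
      simp only [LinearMap.add_apply, LinearMap.comp_apply, hXu, hXv, map_zero, add_zero]
    simp only [LinearMap.sub_apply, LinearMap.add_apply, LinearMap.compl₁₂_apply,
      LinearMap.flip_apply, hF, hcu, hcv, hcancel, hXu, hXv, map_zero, LinearMap.zero_apply]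
    abel
  · intro x y
    have hxX : (x:V) ∈ sX := Submodule.subset_span x.2
    have hyY : (y:V) ∈ sY := Submodule.subset_span y.2
    have hBx : πB (x:V) = 0 := Submodule.projectionOnto_apply_of_mem_right hcB (x := x)
      (Submodule.mem_sup_left hxX)
    have hBy : πB (y:V) = 0 := Submodule.projectionOnto_apply_of_mem_right hcB (x := y)
      (Submodule.mem_sup_right hyY)
    have hXx : πX (x:V) = ⟨x, hxX⟩ := Submodule.projectionOnto_apply_left hcX ⟨x, hxX⟩
    have hXy : πX (y:V) = 0 := Submodule.projectionOnto_apply_of_mem_right hcX (x := y)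
      (Submodule.mem_sup_right hyY)
    have hYx : πY (x:V) = 0 := Submodule.projectionOnto_apply_of_mem_right hcY (x := x)
      (hXA' hxX)
    have hYy : πY (y:V) = ⟨y, hyY⟩ := Submodule.projectionOnto_apply_left hcY ⟨y, hyY⟩
    have haby : ab (y:V) = 0 := by rw [hab]; simp [hBy]
    have hax : a (y:V) = 0 := by
      rw [ha]
      simp [haby, hXy]
    have hcx : c (x:V) = 0 := by
      rw [hc]
      simp [hBx, hYx]
    have habx : ab (x:V) = 0 := by rw [hab]; simp [hBx]
    simp only [LinearMap.sub_apply, LinearMap.add_apply, LinearMap.compl₁₂_apply,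
      LinearMap.flip_apply, hF, hax, hcx, habx, haby, hXx, hXy, hYx, hYy, map_zero,
      LinearMap.zero_apply, LinearMap.map_zero]
    rw [hΦapp x y hxX hyY]
    abel
end

section
/- Let p be an odd prime, let V and W be vector spaces over 𝔽_p, and let β : V × V → W be an alternating bilinear map. Then there exist a group G of exponent p (g^p = 1 for all g ∈ G), an injective group homomorphism ι : Multiplicative W →* G whose range is contained in the center of G, and a surjective group homomorphism π : G →* Multiplicative V whose kernel equals the range of ι, such that for all g, h ∈ G the commutator satisfies ⁅g,h⁆ = ι(β(π g, π h)). In particular G is nilpotent of class ≤ 2 with [G,G] ⊆ ι(W) ⊆ Z(G), and β is the alternating bilinear map induced by the commutator on G/ι(W). (Surjectivity on objects of the functor F from 2-nilpotent exponent-p groups to alternating bilinear maps.) -/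
section Heisenberg

variable {K : Type*} [CommRing K] {V W : Type*} [AddCommGroup V] [Module K V]
  [AddCommGroup W] [Module K W]

/-- Multiplication of the Heisenberg-type group. -/
def heisMul (c : V →ₗ[K] V →ₗ[K] W) (g h : V × W) : V × W :=
  (g.1 + h.1, g.2 + h.2 + c g.1 h.1)

/-- Inversion of the Heisenberg-type group. -/
def heisInv (c : V →ₗ[K] V →ₗ[K] W) (g : V × W) : V × W :=
  (-g.1, -g.2 + c g.1 g.1)

/-- The Heisenberg-type group structure on `V × W` attached to a bilinear map `c`. -/
def heisGroup (c : V →ₗ[K] V →ₗ[K] W) : Group (V × W) where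
  mul := heisMul c
  one := (0, 0)
  inv := heisInv c
  mul_assoc a b d := by
    show heisMul c (heisMul c a b) d = heisMul c a (heisMul c b d)
    simp only [heisMul, map_add, map_neg, map_zero, LinearMap.add_apply, LinearMap.neg_apply,
      LinearMap.zero_apply]
    exact Prod.ext (by abel) (by abel)
  one_mul a := by
    show heisMul c (0, 0) a = a
    simp [heisMul]
  mul_one a := by
    show heisMul c a (0, 0) = a
    simp [heisMul]
  inv_mul_cancel a := by
    show heisMul c (heisInv c a) a = (0, 0)
    simp only [heisMul, heisInv, map_add, map_neg, map_zero, LinearMap.add_apply,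
      LinearMap.neg_apply, LinearMap.zero_apply]
    exact Prod.ext (by abel) (by abel)

end Heisenberg

open scoped commutatorElement

/-- Every alternating bilinear map `β : V × V → W` over `𝔽_p` (`p` an odd prime) is
realized as the commutator map of a group `G` of exponent `p` which is a central
extension of `Multiplicative V` by `Multiplicative W`. -/
theorem exists_group_realizing_alternating_bilinear (p : ℕ) (hp : p.Prime) (hodd : Odd p)
    (V W : Type) [AddCommGroup V] [Module (ZMod p) V]
    [AddCommGroup W] [Module (ZMod p) W]
    (β : V →ₗ[ZMod p] V →ₗ[ZMod p] W) (halt : ∀ x : V, β x x = 0) :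
    ∃ (G : Type) (_ : Group G) (ι : Multiplicative W →* G) (π : G →* Multiplicative V),
      (∀ g : G, g ^ p = 1) ∧
      Function.Injective ι ∧
      ι.range ≤ Subgroup.center G ∧
      Function.Surjective π ∧
      π.ker = ι.range ∧
      (∀ g h : G, ⁅g, h⁆ =
        ι (Multiplicative.ofAdd (β (Multiplicative.toAdd (π g)) (Multiplicative.toAdd (π h))))) := by
  haveI : Fact p.Prime := ⟨hp⟩
  have h2 : (2 : ZMod p) ≠ 0 := by
    have : ((2 : ℕ) : ZMod p) ≠ 0 := by
      rw [Ne, ZMod.natCast_eq_zero_iff]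
      intro h
      have hp2 := (Nat.prime_dvd_prime_iff_eq hp Nat.prime_two).mp h
      subst hp2
      exact (Nat.not_odd_iff_even.mpr even_two) hodd
    simpa using this
  set c : V →ₗ[ZMod p] V →ₗ[ZMod p] W := (2⁻¹ : ZMod p) • β with hc
  have hcalt : ∀ v : V, c v v = 0 := by
    intro v; simp [hc, halt v]
  have hskew : ∀ x y : V, β y x = - β x y := by
    intro x y
    have := halt (x + y)
    simp only [map_add, LinearMap.add_apply, halt] at this
    linear_combination (norm := abel) this
  have hcomm : ∀ x y : V, c x y - c y x = β x y := by
    intro x y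
    have : c x y - c y x = (2⁻¹ : ZMod p) • (β x y - β y x) := by
      simp [hc, smul_sub]
    rw [this, hskew x y, sub_neg_eq_add, ← two_smul (ZMod p) (β x y), smul_smul,
      inv_mul_cancel₀ h2, one_smul]
  letI : Group (V × W) := heisGroup c
  have hmul : ∀ g h : V × W, g * h = (g.1 + h.1, g.2 + h.2 + c g.1 h.1) := fun _ _ => rfl
  have hinv : ∀ g : V × W, g⁻¹ = (-g.1, -g.2 + c g.1 g.1) := fun _ => rfl
  have hone : (1 : V × W) = (0, 0) := rfl
  refine ⟨V × W, inferInstance,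
    { toFun := fun w => (0, Multiplicative.toAdd w)
      map_one' := by simp [hone]
      map_mul' := fun x y => by
        refine Prod.ext ?_ ?_ <;> simp [hmul] },
    { toFun := fun g => Multiplicative.ofAdd g.1
      map_one' := by simp [hone]
      map_mul' := fun x y => by simp [hmul] }, ?_, ?_, ?_, ?_, ?_, ?_⟩
  · -- exponent p
    intro g
    have key : ∀ n : ℕ, g ^ n = (n • g.1, n • g.2) := by
      intro n
      induction n with
      | zero => simp [hone]
      | succ n ih =>
        rw [pow_succ, ih, hmul]
        refine Prod.ext ?_ ?_
        · simp [succ_nsmul]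
        · simp [succ_nsmul, map_nsmul, hcalt]
    have hps : ∀ (M : Type) [AddCommGroup M] [Module (ZMod p) M] (x : M), p • x = 0 := by
      intro M _ _ x
      rw [← Nat.cast_smul_eq_nsmul (ZMod p), ZMod.natCast_self, zero_smul]
    rw [key p, hps V g.1, hps W g.2, hone]
  · -- injectivity of ι
    intro x y hxy
    simpa using congrArg Prod.snd hxy
  · -- range in center
    rintro g ⟨w, rfl⟩
    rw [Subgroup.mem_center_iff]
    intro h
    exact Prod.ext (by simp [hmul]) (by simp [hmul, add_comm])
  · -- surjectivity of π
    intro v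
    exact ⟨(Multiplicative.toAdd v, 0), rfl⟩
  · -- kernel equals range
    ext g
    simp only [MonoidHom.mem_ker, MonoidHom.mem_range, MonoidHom.coe_mk, OneHom.coe_mk]
    constructor
    · intro hg
      refine ⟨Multiplicative.ofAdd g.2, ?_⟩
      have : g.1 = 0 := by simpa using congrArg Multiplicative.toAdd hg
      exact Prod.ext (by simp [this]) (by simp)
    · rintro ⟨w, rfl⟩
      simp
  · -- commutator
    intro g h
    show g * h * g⁻¹ * h⁻¹ = _
    refine Prod.ext ?_ ?_
    · simp [hmul, hinv]
    · simp only [hmul, hinv, map_add, map_neg, LinearMap.add_apply, LinearMap.neg_apply,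
        MonoidHom.coe_mk, OneHom.coe_mk, toAdd_ofAdd]
      rw [← hcomm g.1 h.1]
      abel
end

section
/- Let p be an odd prime and let W, V_G, V_H be vector spaces over 𝔽_p. Let G and H be groups of exponent p equipped with: injective homomorphisms ι_G : Multiplicative W →* G and ι_H : Multiplicative W →* H with central ranges; surjective homomorphisms π_G : G →* Multiplicative V_G and π_H : H →* Multiplicative V_H with kernels equal to the ranges of ι_G and ι_H respectively; and alternating bilinear maps β_G : V_G × V_G → W, β_H : V_H × V_H → W such that ⁅g,g'⁆ = ι_G(β_G(π_G g, π_G g')) for all g,g' ∈ G and ⁅h,h'⁆ = ι_H(β_H(π_H h, π_H h')) for all h,h' ∈ H. Suppose u : V_G → V_H is an injective linear map with β_H(u x, u y) = β_G(x, y) for all x, y ∈ V_G. Then there exists an injective group homomorphism f : G →* H with f ∘ ι_G = ι_H and π_H ∘ f = u ∘ π_G. (Lifting of morphisms along the functor F.) -/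
open Multiplicative
open scoped commutatorElement

/-- An opaque wrapper around `AddCommGroup.zmodModule` (which is a reducible stuck
`match`, breaking instance resolution downstream). -/
def zmodModuleOfTorsion {p : ℕ} {M : Type} [AddCommGroup M] (h : ∀ x : M, p • x = 0) :
    Module (ZMod p) M := AddCommGroup.zmodModule h

/-- Baer splitting: a 2-nilpotent exponent-`p` central extension admits a section `s`
of `π` which is "quadratic" with respect to `½ β`. -/
lemma baer_section (p : ℕ) (hp : p.Prime) (hodd : Odd p)
    (W V : Type) [AddCommGroup W] [Module (ZMod p) W]
    [AddCommGroup V] [Module (ZMod p) V]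
    (G : Type) [Group G] (hexp : ∀ g : G, g ^ p = 1)
    (ι : Multiplicative W →* G)
    (hcent : ι.range ≤ Subgroup.center G)
    (π : G →* Multiplicative V) (hsurj : Function.Surjective π)
    (hker : π.ker = ι.range)
    (β : V →ₗ[ZMod p] V →ₗ[ZMod p] W)
    (hβalt : ∀ x, β x x = 0)
    (hcomm : ∀ g g' : G, ⁅g, g'⁆ = ι (ofAdd (β (toAdd (π g)) (toAdd (π g'))))) :
    ∃ s : V → G, s 0 = 1 ∧ (∀ x, π (s x) = ofAdd x) ∧
      ∀ x y, s x * s y = s (x + y) * ι (ofAdd ((2 : ZMod p)⁻¹ • (β x y))) := by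
  haveI : Fact p.Prime := ⟨hp⟩
  have hp2 : p ≠ 2 := by
    rintro rfl
    exact (Nat.not_odd_iff_even.mpr (by norm_num)) hodd
  have h2 : (2 : ZMod p) ≠ 0 := by
    intro h
    have hd : p ∣ 2 := by
      have := (ZMod.natCast_eq_zero_iff 2 p).mp (by exact_mod_cast h)
      exact this
    exact hp2 ((Nat.prime_dvd_prime_iff_eq hp Nat.prime_two).mp hd)
  set κ : ZMod p := (2 : ZMod p)⁻¹ with hκdef
  have hκ2 : κ + κ = 1 := by
    have : (2 : ZMod p) * κ = 1 := mul_inv_cancel₀ h2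
    calc κ + κ = 2 * κ := by ring
    _ = 1 := this
  -- centrality
  have hcen : ∀ (w : Multiplicative W) (g : G), ι w * g = g * ι w := fun w g =>
    ((Subgroup.mem_center_iff.mp (hcent ⟨w, rfl⟩)) g).symm
  have hkmem : ∀ w : Multiplicative W, π (ι w) = 1 := fun w => by
    have : ι w ∈ π.ker := by rw [hker]; exact ⟨w, rfl⟩
    exact this
  set X : G → V := fun g => toAdd (π g) with hX
  have hanti : ∀ x y : V, β y x = -β x y := by
    intro x y
    have h := hβalt (x + y)
    simp [map_add, hβalt] at h
    exact eq_neg_of_add_eq_zero_left h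
  letI : Zero G := ⟨1⟩
  letI : Add G := ⟨fun a b => a * b * ι (ofAdd (-(κ • β (X a) (X b))))⟩
  letI : Neg G := ⟨fun a => a⁻¹⟩
  have hadd_def : ∀ a b : G, a + b = a * b * ι (ofAdd (-(κ • β (X a) (X b)))) := fun _ _ => rfl
  have hzero_def : (0 : G) = 1 := rfl
  have hXc : ∀ (a b : G) (w : Multiplicative W), X (a * b * ι w) = X a + X b := by
    intro a b w
    simp [hX, map_mul, hkmem]
  have hX0 : X (1 : G) = 0 := by simp [hX]
  have assoc : ∀ a b c : G, a + b + c = a + (b + c) := by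
    intro a b c
    have key : (-(κ • β (X a) (X b))) + -(κ • β (X a + X b) (X c)) =
        (-(κ • β (X b) (X c))) + -(κ • β (X a) (X b + X c)) := by
      simp only [map_add, LinearMap.add_apply, smul_add, neg_add]
      abel
    rw [hadd_def (a+b) c, hadd_def a b, hadd_def a (b+c), hadd_def b c, hXc, hXc]
    rw [mul_assoc (a*b) _ c, hcen]
    simp only [mul_assoc, ← map_mul, ← ofAdd_add]
    rw [key]
  have zero_add' : ∀ a : G, 0 + a = a := by
    intro a
    rw [hadd_def, hzero_def, one_mul]
    simp [hX0]
  have neg_add' : ∀ a : G, -a + a = 0 := by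
    intro a
    show a⁻¹ * a * ι (ofAdd (-(κ • β (X a⁻¹) (X a)))) = (0 : G)
    have hXinv : X a⁻¹ = -(X a) := by simp [hX]
    rw [hXinv, inv_mul_cancel, one_mul, hzero_def]
    simp [hβalt]
  letI addG : AddGroup G := AddGroup.ofLeftAxioms assoc zero_add' neg_add'
  have comm' : ∀ a b : G, a + b = b + a := by
    intro a b
    have hswap : b * a = a * b * ι (ofAdd (β (X b) (X a))) := by
      have hc := hcomm b a
      have h1 : b * a = ⁅b, a⁆ * (a * b) := by
        rw [commutatorElement_def]; group
      rw [h1, hc]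
      exact hcen _ _
    set w : W := β (X a) (X b) with hw
    have key : β (X b) (X a) + -(κ • β (X b) (X a)) = -(κ • w) := by
      rw [hanti (X a) (X b), ← hw]
      have h3 : -w + κ • w = -(κ • w) := by
        calc -w + κ • w = -((κ + κ) • w) + κ • w := by rw [hκ2, one_smul]
        _ = -(κ • w) := by module
      calc -w + -(κ • -w) = -w + κ • w := by module
      _ = -(κ • w) := h3
    rw [hadd_def a b, hadd_def b a, hswap]
    simp only [mul_assoc, ← map_mul, ← ofAdd_add]
    rw [key, ← hw]
  letI acg : AddCommGroup G := { addG with add_comm := comm' }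
  have hn : ∀ (n : ℕ) (a : G), n • a = a ^ n := by
    intro n a
    induction n with
    | zero => rw [zero_nsmul, pow_zero]; rfl
    | succ n ih =>
      rw [succ_nsmul, ih, hadd_def]
      have h0 : β (X (a ^ n)) (X a) = 0 := by
        have hxp : X (a ^ n) = n • X a := by simp [hX, map_pow, toAdd_pow]
        rw [hxp, map_nsmul]
        simp [hβalt]
      rw [h0]
      simp [pow_succ]
  have htor : ∀ a : G, p • a = 0 := by
    intro a
    rw [hn, hexp, hzero_def]
  letI modG : Module (ZMod p) G := zmodModuleOfTorsion htor
  have hXadd : ∀ a b : G, X (a + b) = X a + X b := by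
    intro a b; rw [hadd_def, hXc]
  let πadd : G →+ V := { toFun := X, map_zero' := hX0, map_add' := hXadd }
  let πlin : G →ₗ[ZMod p] V :=
    { toFun := X, map_add' := hXadd, map_smul' := fun c x => ZMod.map_smul πadd c x }
  have hsurj' : Function.Surjective (⇑πlin) := by
    intro v
    obtain ⟨g, hg⟩ := hsurj (ofAdd v)
    exact ⟨g, by simp [πlin, πadd, hX, hg]⟩
  obtain ⟨σ, hσ⟩ :=
    πlin.exists_rightInverse_of_surjective (LinearMap.range_eq_top.mpr hsurj')
  have hXσ : ∀ x : V, X (σ x) = x := by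
    intro x
    have := congrArg (fun f : V →ₗ[ZMod p] V => f x) hσ
    simpa [πlin, πadd] using this
  refine ⟨fun x => σ x, ?_, ?_, ?_⟩
  · show σ 0 = (1 : G)
    rw [map_zero σ]; exact hzero_def
  · intro x
    show π (σ x) = ofAdd x
    have h : toAdd (π (σ x)) = x := hXσ x
    rw [← ofAdd_toAdd (π (σ x)), h]
  · intro x y
    show σ x * σ y = σ (x + y) * ι (ofAdd (κ • β x y))
    have hadd : σ (x + y) = σ x + σ y := map_add σ x y
    rw [hadd_def, hXσ, hXσ] at hadd
    rw [hadd]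
    simp only [mul_assoc, ← map_mul, ← ofAdd_add]
    simp

/-- Lifting of morphisms along the functor `F` from 2-nilpotent exponent-`p` groups
to alternating bilinear maps: an injective linear map `u` between the
bilinearizations that preserves the bilinear maps lifts to an injective group
homomorphism `f : G →* H` fixing the centre `W` and inducing `u`. -/
theorem exists_group_hom_lifting_linear (p : ℕ) (hp : p.Prime) (hodd : Odd p)
    (W V_G V_H : Type) [AddCommGroup W] [Module (ZMod p) W]
    [AddCommGroup V_G] [Module (ZMod p) V_G] [AddCommGroup V_H] [Module (ZMod p) V_H]
    (G H : Type) [Group G] [Group H]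
    (hGexp : ∀ g : G, g ^ p = 1) (hHexp : ∀ h : H, h ^ p = 1)
    (ιG : Multiplicative W →* G) (ιH : Multiplicative W →* H)
    (hιGinj : Function.Injective ιG) (hιHinj : Function.Injective ιH)
    (hιGcent : ιG.range ≤ Subgroup.center G) (hιHcent : ιH.range ≤ Subgroup.center H)
    (πG : G →* Multiplicative V_G) (πH : H →* Multiplicative V_H)
    (hπGsurj : Function.Surjective πG) (hπHsurj : Function.Surjective πH)
    (hkerG : πG.ker = ιG.range) (hkerH : πH.ker = ιH.range)
    (βG : V_G →ₗ[ZMod p] V_G →ₗ[ZMod p] W)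
    (βH : V_H →ₗ[ZMod p] V_H →ₗ[ZMod p] W)
    (hβGalt : ∀ x : V_G, βG x x = 0) (hβHalt : ∀ x : V_H, βH x x = 0)
    (hcommG : ∀ g g' : G, ⁅g, g'⁆ =
      ιG (Multiplicative.ofAdd (βG (Multiplicative.toAdd (πG g)) (Multiplicative.toAdd (πG g')))))
    (hcommH : ∀ h h' : H, ⁅h, h'⁆ =
      ιH (Multiplicative.ofAdd (βH (Multiplicative.toAdd (πH h)) (Multiplicative.toAdd (πH h')))))
    (u : V_G →ₗ[ZMod p] V_H) (huinj : Function.Injective u)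
    (huβ : ∀ x y : V_G, βH (u x) (u y) = βG x y) :
    ∃ f : G →* H,
      Function.Injective f ∧
      (∀ w : Multiplicative W, f (ιG w) = ιH w) ∧
      (∀ g : G, πH (f g) = Multiplicative.ofAdd (u (Multiplicative.toAdd (πG g)))) := by
  obtain ⟨sG, hsG0, hsGπ, hsGmul⟩ :=
    baer_section p hp hodd W V_G G hGexp ιG hιGcent πG hπGsurj hkerG βG hβGalt hcommG
  obtain ⟨sH, hsH0, hsHπ, hsHmul⟩ :=
    baer_section p hp hodd W V_H H hHexp ιH hιHcent πH hπHsurj hkerH βH hβHalt hcommH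
  set κ : ZMod p := (2 : ZMod p)⁻¹ with hκdef
  set xg : G → V_G := fun g => toAdd (πG g) with hxg
  -- centrality
  have hcenG : ∀ (w : Multiplicative W) (g : G), ιG w * g = g * ιG w := fun w g =>
    ((Subgroup.mem_center_iff.mp (hιGcent ⟨w, rfl⟩)) g).symm
  have hcenH : ∀ (w : Multiplicative W) (h : H), ιH w * h = h * ιH w := fun w h =>
    ((Subgroup.mem_center_iff.mp (hιHcent ⟨w, rfl⟩)) h).symm
  have hkG : ∀ w : Multiplicative W, πG (ιG w) = 1 := fun w => by
    have : ιG w ∈ πG.ker := by rw [hkerG]; exact ⟨w, rfl⟩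
    exact this
  have hkH : ∀ w : Multiplicative W, πH (ιH w) = 1 := fun w => by
    have : ιH w ∈ πH.ker := by rw [hkerH]; exact ⟨w, rfl⟩
    exact this
  -- decomposition
  have hmem : ∀ g : G, ∃ w : Multiplicative W, ιG w = g * (sG (xg g))⁻¹ := by
    intro g
    have : g * (sG (xg g))⁻¹ ∈ πG.ker := by
      have : πG (g * (sG (xg g))⁻¹) = 1 := by
        rw [map_mul, map_inv, hsGπ]
        simp [hxg]
      exact this
    rw [hkerG] at this
    exact this
  choose δ hδ using hmem
  have hdecomp : ∀ g : G, g = sG (xg g) * ιG (δ g) := by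
    intro g
    rw [← hcenG, hδ g]
    group
  have hδuniq : ∀ (g : G) (w : Multiplicative W), g = sG (xg g) * ιG w → δ g = w := by
    intro g w h
    apply hιGinj
    have := (hdecomp g).symm.trans h
    exact mul_left_cancel this
  have hxgmul : ∀ g g' : G, xg (g * g') = xg g + xg g' := by
    intro g g'; simp [hxg, map_mul]
  have hδmul : ∀ g g' : G,
      δ (g * g') = ofAdd (κ • βG (xg g) (xg g')) * δ g * δ g' := by
    intro g g'
    apply hδuniq
    rw [hxgmul]
    calc g * g' = (sG (xg g) * ιG (δ g)) * (sG (xg g') * ιG (δ g')) := by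
          rw [← hdecomp, ← hdecomp]
      _ = (sG (xg g) * sG (xg g')) * (ιG (δ g) * ιG (δ g')) := by
          rw [mul_assoc, ← mul_assoc (ιG (δ g)), hcenG, mul_assoc, mul_assoc]
      _ = sG (xg g + xg g') * ιG (ofAdd (κ • βG (xg g) (xg g')) * δ g * δ g') := by
          rw [hsGmul, map_mul, map_mul]
          simp only [mul_assoc, hκdef]
  -- the lift
  set f0 : G → H := fun g => sH (u (xg g)) * ιH (δ g) with hf0
  have hmul : ∀ g g' : G, f0 (g * g') = f0 g * f0 g' := by
    intro g g'
    have e1 : f0 g * f0 g' =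
        (sH (u (xg g)) * sH (u (xg g'))) * ιH (δ g * δ g') := by
      rw [hf0]
      simp only
      rw [map_mul]
      calc sH (u (xg g)) * ιH (δ g) * (sH (u (xg g')) * ιH (δ g'))
          = sH (u (xg g)) * (ιH (δ g) * sH (u (xg g'))) * ιH (δ g') := by group
        _ = sH (u (xg g)) * (sH (u (xg g')) * ιH (δ g)) * ιH (δ g') := by rw [hcenH]
        _ = sH (u (xg g)) * sH (u (xg g')) * (ιH (δ g) * ιH (δ g')) := by group
    rw [e1, hf0]
    simp only
    rw [hxgmul, hδmul, map_add, hsHmul, huβ]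
    simp only [map_mul, mul_assoc]
  let f : G →* H := MonoidHom.mk' f0 hmul
  have hπf : ∀ g : G, πH (f g) = ofAdd (u (toAdd (πG g))) := by
    intro g
    show πH (f0 g) = _
    rw [hf0]
    simp only
    rw [map_mul, hkH, mul_one, hsHπ]
  have hιf : ∀ w : Multiplicative W, f (ιG w) = ιH w := by
    intro w
    show f0 (ιG w) = ιH w
    have hx : xg (ιG w) = 0 := by simp [hxg, hkG]
    have hδw : δ (ιG w) = w := by
      apply hδuniq
      rw [hx, hsG0, one_mul]
    rw [hf0]
    simp only
    rw [hx, hδw, map_zero, hsH0, one_mul]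
  refine ⟨f, ?_, hιf, hπf⟩
  rw [injective_iff_map_eq_one]
  intro g hg
  have h1 : ofAdd (u (toAdd (πG g))) = 1 := by rw [← hπf g, hg, map_one]
  have h2 : u (xg g) = 0 := by
    have := h1
    rwa [← ofAdd_zero, ofAdd.apply_eq_iff_eq] at this
  have h3 : xg g = 0 := huinj (by rw [h2, map_zero])
  have h4 : f0 g = 1 := hg
  rw [hf0] at h4
  simp only at h4
  rw [show xg g = 0 from h3, map_zero, hsH0, one_mul] at h4
  have h5 : δ g = 1 := by
    apply hιHinj; rw [h4, map_one]
  have := hdecomp g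
  rw [h3, hsG0, h5, map_one, one_mul] at this
  exact this
end

section
/- Let p be an odd prime and n a natural number. Let A, B, C be finite groups of exponent p with designated tuples c^A : Fin n → A, c^B : Fin n → B, c^C : Fin n → C such that in each group the subgroup P generated by the tuple satisfies [G,G] ≤ P ≤ Z(G) and P has order p^n (the tuple is linearly independent). Suppose f : B →* A and g : B →* C are injective homomorphisms with f(c^B i) = c^A i and g(c^B i) = c^C i for all i. Then there exist a finite group D of exponent p with a tuple c^D : Fin n → D satisfying the same conditions ([D,D] ≤ ⟨c^D⟩ ≤ Z(D) and ⟨c^D⟩ of order p^n), and injective homomorphisms f' : A →* D, g' : C →* D with f'(c^A i) = c^D i = g'(c^C i) for all i and f' ∘ f = g' ∘ g. (The amalgamation property for the class K(n).) -/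
open scoped commutatorElement

section Helpers

variable {G : Type} [Group G]

lemma baer_comm_left (hc : ∀ a b z : G, z * ⁅a, b⁆ = ⁅a, b⁆ * z)
    (x y z : G) : ⁅x * y, z⁆ = ⁅x, z⁆ * ⁅y, z⁆ := by
  have h1 : ⁅x * y, z⁆ = x * ⁅y, z⁆ * x⁻¹ * ⁅x, z⁆ := by
    simp only [commutatorElement_def]; group
  rw [h1, hc y z x, mul_inv_cancel_right]
  exact hc x z _

lemma baer_comm_right (hc : ∀ a b z : G, z * ⁅a, b⁆ = ⁅a, b⁆ * z)
    (x y z : G) : ⁅x, y * z⁆ = ⁅x, y⁆ * ⁅x, z⁆ := by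
  have h1 : ⁅x, y * z⁆ = ⁅x, y⁆ * (y * ⁅x, z⁆ * y⁻¹) := by
    simp only [commutatorElement_def]; group
  rw [h1, hc x z y, mul_inv_cancel_right]

lemma baer_comm_pow_central (hc : ∀ a b z : G, z * ⁅a, b⁆ = ⁅a, b⁆ * z)
    (a b z : G) (k : ℕ) : z * ⁅a, b⁆ ^ k = ⁅a, b⁆ ^ k * z := by
  induction k with
  | zero => simp
  | succ k ih => rw [pow_succ, ← mul_assoc, ih, mul_assoc, hc, mul_assoc]

lemma baer_comm_central_left (x z : G) (hx : ∀ w : G, w * x = x * w) : ⁅x, z⁆ = 1 := by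
  rw [commutatorElement_def, ← hx z, mul_inv_cancel_right, mul_inv_cancel]

lemma baer_comm_central_right (x z : G) (hx : ∀ w : G, w * x = x * w) : ⁅z, x⁆ = 1 := by
  rw [commutatorElement_def, hx z, mul_inv_cancel_right, mul_inv_cancel]

end Helpers

section Baer

variable {G : Type} [Group G]

/-- powers of commutators commute with everything. -/
lemma baer_hm (hc : ∀ a b z : G, z * ⁅a, b⁆ = ⁅a, b⁆ * z) (a b z : G) (k : ℕ) :
    z * ⁅a, b⁆ ^ k = ⁅a, b⁆ ^ k * z :=
  baer_comm_pow_central hc a b z k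

lemma baer_sq (p m : ℕ) (h2m : 2 * m = p + 1) (hexp : ∀ g : G, g ^ p = 1) (a b : G) :
    ⁅a, b⁆ ^ m * ⁅a, b⁆ ^ m = ⁅a, b⁆ := by
  rw [← pow_add, ← two_mul, h2m, pow_succ, hexp, one_mul]

def baerACG (p m : ℕ) (h2m : 2 * m = p + 1) (hexp : ∀ g : G, g ^ p = 1)
    (hc : ∀ a b z : G, z * ⁅a, b⁆ = ⁅a, b⁆ * z) : AddCommGroup G where
  add x y := x * y * ⁅y, x⁆ ^ m
  zero := 1
  neg x := x⁻¹
  nsmul n x := x ^ n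
  zsmul n x := x ^ n
  nsmul_zero x := pow_zero x
  nsmul_succ n x := by
    show x ^ (n + 1) = x ^ n * x * ⁅x, x ^ n⁆ ^ m
    rw [commutatorElement_eq_one_iff_commute.mpr ((Commute.refl x).pow_right n),
      one_pow, mul_one, pow_succ]
  zsmul_zero' x := zpow_zero x
  zsmul_succ' n x := by
    show x ^ (n.succ : ℤ) = x ^ (n : ℤ) * x * ⁅x, x ^ (n : ℤ)⁆ ^ m
    rw [show ((n.succ : ℤ)) = (n : ℤ) + 1 by push_cast; ring, zpow_add_one,
      commutatorElement_eq_one_iff_commute.mpr ((Commute.refl x).zpow_right (n : ℤ)),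
      one_pow, mul_one]
  zsmul_neg' n x := by
    show x ^ (Int.negSucc n) = (x ^ (n.succ : ℤ))⁻¹
    rw [zpow_negSucc, ← zpow_natCast]
  zero_add y := by
    show 1 * y * ⁅y, (1 : G)⁆ ^ m = y
    simp
  add_zero x := by
    show x * 1 * ⁅(1 : G), x⁆ ^ m = x
    simp
  neg_add_cancel x := by
    show x⁻¹ * x * ⁅x, x⁻¹⁆ ^ m = 1
    simp [commutatorElement_def]
  add_comm x y := by
    show x * y * ⁅y, x⁆ ^ m = y * x * ⁅x, y⁆ ^ m
    have hyx : y * x = ⁅y, x⁆ * (x * y) := by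
      simp only [commutatorElement_def]; group
    rw [hyx, ← hc y x (x * y)]
    simp only [mul_assoc]
    congr 1; congr 1
    rw [show ⁅x, y⁆ = ⁅y, x⁆⁻¹ from (commutatorElement_inv y x).symm, inv_pow,
      eq_mul_inv_iff_mul_eq]
    exact baer_sq p m h2m hexp y x
  add_assoc x y z := by
    show (x * y * ⁅y, x⁆ ^ m) * z * ⁅z, x * y * ⁅y, x⁆ ^ m⁆ ^ m
        = x * (y * z * ⁅z, y⁆ ^ m) * ⁅y * z * ⁅z, y⁆ ^ m, x⁆ ^ m
    have hC1 : ⁅z, x * y * ⁅y, x⁆ ^ m⁆ = ⁅z, x⁆ * ⁅z, y⁆ := by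
      rw [baer_comm_right hc z (x * y), baer_comm_central_right _ z
        (fun w => baer_hm hc y x w m), mul_one, baer_comm_right hc]
    have hC2 : ⁅y * z * ⁅z, y⁆ ^ m, x⁆ = ⁅y, x⁆ * ⁅z, x⁆ := by
      rw [baer_comm_left hc (y * z), baer_comm_central_left _ x
        (fun w => baer_hm hc z y w m), mul_one, baer_comm_left hc]
    have hcom : ∀ a b c d : G, Commute ⁅a, b⁆ ⁅c, d⁆ := fun a b c d => (hc a b _).symm
    rw [hC1, hC2, (hcom z x z y).mul_pow, (hcom y x z x).mul_pow]
    have hswap : ∀ (a b c d : G) (j k : ℕ), ⁅a,b⁆ ^ j * ⁅c,d⁆ ^ k = ⁅c,d⁆ ^ k * ⁅a,b⁆ ^ j :=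
      fun a b c d j k => baer_hm hc c d _ k
    simp only [mul_assoc]
    congr 1; congr 1
    rw [← mul_assoc (⁅y,x⁆^m) z, ← baer_hm hc y x z m, mul_assoc]
    congr 1
    rw [← mul_assoc (⁅z,y⁆^m), hswap z y y x, mul_assoc]
    congr 1
    exact hswap z x z y m m

end Baer

section Bridge

variable {G : Type} [Group G] [AddCommGroup G] (m : ℕ)

lemma bridge_add_central (hadd : ∀ x y : G, x + y = x * y * ⁅y, x⁆ ^ m)
    (x y : G) (hy : ∀ w, w * y = y * w) : x + y = x * y := by
  rw [hadd, baer_comm_central_left y x hy, one_pow, mul_one]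

lemma bridge_comm_add_left (hadd : ∀ x y : G, x + y = x * y * ⁅y, x⁆ ^ m)
    (hc : ∀ a b z : G, z * ⁅a, b⁆ = ⁅a, b⁆ * z)
    (x x' y : G) : ⁅x + x', y⁆ = ⁅x, y⁆ + ⁅x', y⁆ := by
  rw [bridge_add_central m hadd _ _ (hc x' y), hadd x x', baer_comm_left hc,
    baer_comm_central_left _ _ (fun w => baer_hm hc x' x w m), mul_one, baer_comm_left hc]

lemma bridge_comm_add_right (hadd : ∀ x y : G, x + y = x * y * ⁅y, x⁆ ^ m)
    (hc : ∀ a b z : G, z * ⁅a, b⁆ = ⁅a, b⁆ * z)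
    (x y y' : G) : ⁅x, y + y'⁆ = ⁅x, y⁆ + ⁅x, y'⁆ := by
  rw [bridge_add_central m hadd _ _ (hc x y'), hadd y y', baer_comm_right hc,
    baer_comm_central_right _ _ (fun w => baer_hm hc y' y w m), mul_one, baer_comm_right hc]

lemma bridge_mul_eq_add (hadd : ∀ x y : G, x + y = x * y * ⁅y, x⁆ ^ m)
    (hc : ∀ a b z : G, z * ⁅a, b⁆ = ⁅a, b⁆ * z)
    (hnsmul : ∀ (k : ℕ) (x : G), k • x = x ^ k)
    (x y : G) : x * y = x + y + m • ⁅x, y⁆ := by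
  rw [hnsmul, bridge_add_central m hadd _ _ (fun w => baer_hm hc x y w m), hadd x y,
    mul_assoc, show ⁅y, x⁆ ^ m * ⁅x, y⁆ ^ m = 1 by
      rw [show ⁅x, y⁆ = ⁅y, x⁆⁻¹ from (commutatorElement_inv y x).symm, inv_pow,
        mul_inv_cancel], mul_one]

lemma bridge_comm_skew (hneg : ∀ x : G, -x = x⁻¹) (x y : G) : ⁅y, x⁆ = -⁅x, y⁆ := by
  rw [hneg]; exact (commutatorElement_inv x y).symm

lemma bridge_comm_zero_left (hzero : (0 : G) = 1) (y : G) : ⁅(0 : G), y⁆ = 0 := by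
  rw [hzero, commutatorElement_one_left]

lemma bridge_comm_zero_right (hzero : (0 : G) = 1) (y : G) : ⁅y, (0 : G)⁆ = 0 := by
  rw [hzero, commutatorElement_one_right]

lemma bridge_mem_add (hadd : ∀ x y : G, x + y = x * y * ⁅y, x⁆ ^ m)
    {P : Subgroup G} (hcen : ∀ z ∈ P, ∀ w, w * z = z * w)
    {x y : G} (hx : x ∈ P) (hy : y ∈ P) : x + y ∈ P := by
  rw [bridge_add_central m hadd _ _ (hcen y hy)]; exact mul_mem hx hy

lemma bridge_mem_zero (hzero : (0 : G) = 1) (P : Subgroup G) : (0 : G) ∈ P := by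
  rw [hzero]; exact one_mem P

lemma bridge_mem_neg (hneg : ∀ x : G, -x = x⁻¹) {P : Subgroup G}
    {x : G} (hx : x ∈ P) : -x ∈ P := by
  rw [hneg]; exact inv_mem hx

lemma bridge_mem_smul (hnsmul : ∀ (k : ℕ) (x : G), k • x = x ^ k) {P : Subgroup G}
    {x : G} (hx : x ∈ P) (k : ℕ) : k • x ∈ P := by
  rw [hnsmul]; exact pow_mem hx k

variable {H : Type} [Group H] [AddCommGroup H]

lemma bridge_hom_add (hadd : ∀ x y : G, x + y = x * y * ⁅y, x⁆ ^ m)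
    (haddH : ∀ x y : H, x + y = x * y * ⁅y, x⁆ ^ m)
    (φ : G →* H) (x y : G) : φ (x + y) = φ x + φ y := by
  rw [hadd, map_mul, map_mul, map_pow, map_commutatorElement, haddH]

lemma bridge_hom_smul (hnsmul : ∀ (k : ℕ) (x : G), k • x = x ^ k)
    (hnsmulH : ∀ (k : ℕ) (x : H), k • x = x ^ k)
    (φ : G →* H) (k : ℕ) (x : G) : φ (k • x) = k • φ x := by
  rw [hnsmul, map_pow, hnsmulH]

lemma bridge_hom_zero (hzero : (0 : G) = 1) (hzeroH : (0 : H) = 1)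
    (φ : G →* H) : φ (0 : G) = 0 := by
  rw [hzero, map_one, hzeroH]

end Bridge

def myZModModule {p : ℕ} {G : Type} [AddCommGroup G] (h : ∀ x : G, p • x = 0) :
    Module (ZMod p) G := AddCommGroup.zmodModule h

structure Amalg (A C : Type) : Type where
  a : A
  c : C




/-- Membership in the class `𝕂(n)`: a group `G` of exponent `p` with a designated
tuple `c : Fin n → G` such that `[G,G] ≤ ⟨c⟩ ≤ Z(G)` and `⟨c⟩` has order `p ^ n`
(i.e. the tuple is linearly independent). -/
def MemKClass (p n : ℕ) (G : Type*) [Group G] (c : Fin n → G) : Prop :=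
  (∀ g : G, g ^ p = 1) ∧
  commutator G ≤ Subgroup.closure (Set.range c) ∧
  Subgroup.closure (Set.range c) ≤ Subgroup.center G ∧
  Nat.card (Subgroup.closure (Set.range c)) = p ^ n

set_option maxHeartbeats 1000000 in
/-- The amalgamation property for the class `𝕂(n)` of finite exponent-`p` groups `G`
with `[G,G] ≤ ⟨c₁,…,cₙ⟩ ≤ Z(G)` and `c₁,…,cₙ` linearly independent. -/
theorem amalgamation_Kn (p n : ℕ) (hp : p.Prime) (hodd : Odd p)
    (A B C : Type) [Group A] [Group B] [Group C] [Finite A] [Finite B] [Finite C]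
    (cA : Fin n → A) (cB : Fin n → B) (cC : Fin n → C)
    (hA : MemKClass p n A cA) (hB : MemKClass p n B cB) (hC : MemKClass p n C cC)
    (f : B →* A) (g : B →* C)
    (hfinj : Function.Injective f) (hginj : Function.Injective g)
    (hfc : ∀ i, f (cB i) = cA i) (hgc : ∀ i, g (cB i) = cC i) :
    ∃ (D : Type) (_ : Group D) (_ : Finite D) (cD : Fin n → D)
      (f' : A →* D) (g' : C →* D),
      MemKClass p n D cD ∧
      Function.Injective f' ∧ Function.Injective g' ∧
      (∀ i, f' (cA i) = cD i) ∧ (∀ i, g' (cC i) = cD i) ∧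
      (∀ b : B, f' (f b) = g' (g b)) := by
  obtain ⟨hexpA, hcomA, hcenA, hcardA⟩ := hA
  obtain ⟨hexpB, hcomB, hcenB, hcardB⟩ := hB
  obtain ⟨hexpC, hcomC, hcenC, hcardC⟩ := hC
  haveI := Fact.mk hp
  set m := (p + 1) / 2 with hmdef
  have h2m : 2 * m = p + 1 := by obtain ⟨k, hk⟩ := hodd; omega
  -- commutator elements lie in the distinguished central subgroups
  have hmemA : ∀ x y : A, ⁅x, y⁆ ∈ Subgroup.closure (Set.range cA) := fun x y =>
    hcomA (by rw [commutator_def]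
              exact Subgroup.commutator_mem_commutator (Subgroup.mem_top x) (Subgroup.mem_top y))
  have hmemB : ∀ x y : B, ⁅x, y⁆ ∈ Subgroup.closure (Set.range cB) := fun x y =>
    hcomB (by rw [commutator_def]
              exact Subgroup.commutator_mem_commutator (Subgroup.mem_top x) (Subgroup.mem_top y))
  have hmemC : ∀ x y : C, ⁅x, y⁆ ∈ Subgroup.closure (Set.range cC) := fun x y =>
    hcomC (by rw [commutator_def]
              exact Subgroup.commutator_mem_commutator (Subgroup.mem_top x) (Subgroup.mem_top y))
  have hcA : ∀ a b z : A, z * ⁅a, b⁆ = ⁅a, b⁆ * z := fun a b z =>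
    Subgroup.mem_center_iff.mp (hcenA (hmemA a b)) z
  have hcB : ∀ a b z : B, z * ⁅a, b⁆ = ⁅a, b⁆ * z := fun a b z =>
    Subgroup.mem_center_iff.mp (hcenB (hmemB a b)) z
  have hcC : ∀ a b z : C, z * ⁅a, b⁆ = ⁅a, b⁆ * z := fun a b z =>
    Subgroup.mem_center_iff.mp (hcenC (hmemC a b)) z
  -- Baer additive structures
  letI iA : AddCommGroup A := baerACG p m h2m hexpA hcA
  letI iB : AddCommGroup B := baerACG p m h2m hexpB hcB
  letI iC : AddCommGroup C := baerACG p m h2m hexpC hcC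
  have haddA : ∀ x y : A, x + y = x * y * ⁅y, x⁆ ^ m := fun _ _ => rfl
  have haddB : ∀ x y : B, x + y = x * y * ⁅y, x⁆ ^ m := fun _ _ => rfl
  have haddC : ∀ x y : C, x + y = x * y * ⁅y, x⁆ ^ m := fun _ _ => rfl
  have hzA : (0 : A) = 1 := rfl
  have hzB : (0 : B) = 1 := rfl
  have hzC : (0 : C) = 1 := rfl
  have hnegA : ∀ x : A, -x = x⁻¹ := fun _ => rfl
  have hnegC : ∀ x : C, -x = x⁻¹ := fun _ => rfl
  have hnsA : ∀ (k : ℕ) (x : A), k • x = x ^ k := fun _ _ => rfl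
  have hnsB : ∀ (k : ℕ) (x : B), k • x = x ^ k := fun _ _ => rfl
  have hnsC : ∀ (k : ℕ) (x : C), k • x = x ^ k := fun _ _ => rfl
  have hpA : ∀ x : A, p • x = 0 := fun x => by rw [hnsA, hexpA x, hzA]
  have hpB : ∀ x : B, p • x = 0 := fun x => by rw [hnsB, hexpB x, hzB]
  have hpC : ∀ x : C, p • x = 0 := fun x => by rw [hnsC, hexpC x, hzC]
  letI mA : Module (ZMod p) A := myZModModule hpA
  letI mB : Module (ZMod p) B := myZModModule hpB
  letI mC : Module (ZMod p) C := myZModModule hpC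
  -- f and g as linear maps, and their retractions
  have hfadd : ∀ x y : B, f (x + y) = f x + f y := bridge_hom_add m haddB haddA f
  have hgadd : ∀ x y : B, g (x + y) = g x + g y := bridge_hom_add m haddB haddC g
  let fl : B →ₗ[ZMod p] A := AddMonoidHom.toZModLinearMap p (AddMonoidHom.mk' f hfadd)
  let gl : B →ₗ[ZMod p] C := AddMonoidHom.toZModLinearMap p (AddMonoidHom.mk' g hgadd)
  obtain ⟨s, hs0⟩ := LinearMap.exists_leftInverse_of_injective fl
    (LinearMap.ker_eq_bot.mpr (fun a b h => hfinj h))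
  obtain ⟨r, hr0⟩ := LinearMap.exists_leftInverse_of_injective gl
    (LinearMap.ker_eq_bot.mpr (fun a b h => hginj h))
  have hsf : ∀ b : B, s (f b) = b := fun b => DFunLike.congr_fun hs0 b
  have hrg : ∀ b : B, r (g b) = b := fun b => DFunLike.congr_fun hr0 b
  -- distinguished subgroups
  set PA := Subgroup.closure (Set.range cA) with hPAdef
  set PB := Subgroup.closure (Set.range cB) with hPBdef
  set PC := Subgroup.closure (Set.range cC) with hPCdef
  have hfcB : ⇑f ∘ cB = cA := funext hfc
  have hgcB : ⇑g ∘ cB = cC := funext hgc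
  have hmapA : PB.map f = PA := by
    rw [hPAdef, hPBdef, MonoidHom.map_closure, ← Set.range_comp, hfcB]
  have hmapC : PB.map g = PC := by
    rw [hPCdef, hPBdef, MonoidHom.map_closure, ← Set.range_comp, hgcB]
  have hcenPA : ∀ z ∈ PA, ∀ w : A, w * z = z * w := fun z hz w =>
    Subgroup.mem_center_iff.mp (hcenA hz) w
  have hcenPC : ∀ z ∈ PC, ∀ w : C, w * z = z * w := fun z hz w =>
    Subgroup.mem_center_iff.mp (hcenC hz) w
  have hsP : ∀ w ∈ PA, s w ∈ PB := by
    intro w hw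
    have hw' : w ∈ PB.map f := by rw [hmapA]; exact hw
    obtain ⟨b, hb, rfl⟩ := Subgroup.mem_map.mp hw'
    rw [hsf b]; exact hb
  -- the projection q onto the complement of the image of g
  set q : C → C := fun z => z - g (r z) with hqdef
  have hq_add : ∀ u v : C, q (u + v) = q u + q v := fun u v => by
    show (u + v) - g (r (u + v)) = (u - g (r u)) + (v - g (r v))
    rw [map_add r, hgadd]; abel
  have hg0 : g (0 : B) = 0 := bridge_hom_zero hzB hzC g
  have hf0 : f (0 : B) = 0 := bridge_hom_zero hzB hzA f
  have hq0 : q (0 : C) = 0 := by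
    show (0 : C) - g (r 0) = 0
    rw [map_zero r, hg0, sub_zero]
  have hqg : ∀ b : B, q (g b) = 0 := fun b => by
    show g b - g (r (g b)) = 0
    rw [hrg, sub_self]
  have hqP : ∀ z ∈ PC, q z = 0 := by
    intro z hz
    have hz' : z ∈ PB.map g := by rw [hmapC]; exact hz
    obtain ⟨b, -, rfl⟩ := Subgroup.mem_map.mp hz'
    exact hqg b
  have hqq : ∀ z : C, q (q z) = q z := fun z => by
    have h1 : r (q z) = 0 := by show r (z - g (r z)) = 0; rw [map_sub, hrg, sub_self]
    show q z - g (r (q z)) = q z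
    rw [h1, hg0, sub_zero]
  have hgrq : ∀ z : C, g (r z) + q z = z := fun z => by
    show g (r z) + (z - g (r z)) = z; abel
  -- the alternating form on the amalgam
  obtain ⟨bD, hbDdef⟩ : ∃ bD : Amalg A C → Amalg A C → A, ∀ x y : Amalg A C,
      bD x y = ⁅x.a, y.a⁆ + f (r (⁅q x.c, q y.c⁆ + ⁅g (s x.a), q y.c⁆ - ⁅g (s y.a), q x.c⁆)) :=
    ⟨fun x y => ⁅x.a, y.a⁆ + f (r (⁅q x.c, q y.c⁆ + ⁅g (s x.a), q y.c⁆ - ⁅g (s y.a), q x.c⁆)),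
      fun _ _ => rfl⟩
  have hfrP : ∀ z ∈ PC, f (r z) ∈ PA := fun z hz => by
    have hz' : z ∈ PB.map g := by rw [hmapC]; exact hz
    obtain ⟨b, hb, rfl⟩ := Subgroup.mem_map.mp hz'
    rw [← hmapA]; exact Subgroup.mem_map.mpr ⟨r (g b), by rw [hrg]; exact hb, rfl⟩
  have hPCadd : ∀ {u v : C}, u ∈ PC → v ∈ PC → u + v ∈ PC := fun hu hv =>
    bridge_mem_add m haddC hcenPC hu hv
  have hPCsub : ∀ {u v : C}, u ∈ PC → v ∈ PC → u - v ∈ PC := fun hu hv => by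
    rw [sub_eq_add_neg]
    exact bridge_mem_add m haddC hcenPC hu (bridge_mem_neg hnegC hv)
  have hbP : ∀ x y : Amalg A C, bD x y ∈ PA := by
    intro x y
    rw [hbDdef]
    exact bridge_mem_add m haddA hcenPA (hmemA _ _)
      (hfrP _ (hPCsub (hPCadd (hmemC _ _) (hmemC _ _)) (hmemC _ _)))
  -- commutator vanishing with central entries
  have hc1A : ∀ z ∈ PA, ∀ w : A, ⁅z, w⁆ = (0 : A) := fun z hz w =>
    (baer_comm_central_left z w (hcenPA z hz)).trans hzA.symm
  have hc2A : ∀ z ∈ PA, ∀ w : A, ⁅w, z⁆ = (0 : A) := fun z hz w =>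
    (baer_comm_central_right z w (hcenPA z hz)).trans hzA.symm
  have hc1C : ∀ z ∈ PC, ∀ w : C, ⁅z, w⁆ = (0 : C) := fun z hz w =>
    (baer_comm_central_left z w (hcenPC z hz)).trans hzC.symm
  have hc2C : ∀ z ∈ PC, ∀ w : C, ⁅w, z⁆ = (0 : C) := fun z hz w =>
    (baer_comm_central_right z w (hcenPC z hz)).trans hzC.symm
  have hgsP : ∀ w ∈ PA, g (s w) ∈ PC := fun w hw => by
    rw [← hmapC]; exact Subgroup.mem_map.mpr ⟨s w, hsP w hw, rfl⟩
  have hfr0 : f (r (0 : C)) = 0 := by rw [map_zero r, hf0]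
  -- vanishing of bD when one argument is central
  have hzeroL : ∀ w ∈ PA, ∀ y : Amalg A C, bD ⟨w, 0⟩ y = 0 := by
    intro w hw y
    rw [hbDdef]
    dsimp only
    rw [hq0, hc1A w hw, bridge_comm_zero_left hzC, hc1C _ (hgsP w hw),
      bridge_comm_zero_right hzC]
    simp [hf0, hfr0]
  have hzeroR : ∀ w ∈ PA, ∀ y : Amalg A C, bD y ⟨w, 0⟩ = 0 := by
    intro w hw y
    rw [hbDdef]
    dsimp only
    rw [hq0, hc2A w hw, bridge_comm_zero_right hzC, bridge_comm_zero_right hzC,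
      hc1C _ (hgsP w hw)]
    simp [hf0, hfr0]
  have hfr_add : ∀ u v : C, f (r (u + v)) = f (r u) + f (r v) := fun u v => by
    rw [map_add r, hfadd]
  have heta : ∀ x : Amalg A C, Amalg.mk x.a x.c = x := fun _ => rfl
  have hreassoc : ∀ P₁ P₂ Q₁ Q₂ R₁ R₂ : C,
      (P₁ + P₂) + (Q₁ + Q₂) - (R₁ + R₂) = (P₁ + Q₁ - R₁) + (P₂ + Q₂ - R₂) := by
    intros; abel
  have hbL : ∀ (a₁ a₂ : A) (c₁ c₂ : C) (y : Amalg A C),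
      bD ⟨a₁ + a₂, c₁ + c₂⟩ y = bD ⟨a₁, c₁⟩ y + bD ⟨a₂, c₂⟩ y := by
    intro a₁ a₂ c₁ c₂ y
    rw [hbDdef, hbDdef, hbDdef]
    dsimp only
    rw [hq_add, map_add s, hgadd, bridge_comm_add_left m haddA hcA,
      bridge_comm_add_left m haddC hcC, bridge_comm_add_left m haddC hcC,
      bridge_comm_add_right m haddC hcC, hreassoc, hfr_add]
    abel
  have hbR : ∀ (y : Amalg A C) (a₁ a₂ : A) (c₁ c₂ : C),
      bD y ⟨a₁ + a₂, c₁ + c₂⟩ = bD y ⟨a₁, c₁⟩ + bD y ⟨a₂, c₂⟩ := by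
    intro y a₁ a₂ c₁ c₂
    rw [hbDdef, hbDdef, hbDdef]
    dsimp only
    rw [hq_add, map_add s, hgadd, bridge_comm_add_right m haddA hcA,
      bridge_comm_add_right m haddC hcC, bridge_comm_add_right m haddC hcC,
      bridge_comm_add_left m haddC hcC, hreassoc, hfr_add]
    abel
  have hbalt : ∀ x : Amalg A C, bD x x = 0 := by
    intro x
    rw [hbDdef]
    rw [commutatorElement_self, commutatorElement_self, ← hzC, ← hzA, zero_add,
      add_sub_cancel_right, hfr0]
  have h00P : (0 : A) ∈ PA := bridge_mem_zero hzA PA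
  have hb0L : ∀ y : Amalg A C, bD ⟨0, 0⟩ y = 0 := fun y => hzeroL 0 h00P y
  have hbneg : ∀ (a : A) (c : C) (y : Amalg A C), bD ⟨-a, -c⟩ y = - bD ⟨a, c⟩ y := by
    intro a c y
    have h1 := hbL a (-a) c (-c) y
    rw [add_neg_cancel, add_neg_cancel, hb0L] at h1
    exact (neg_eq_of_add_eq_zero_right h1.symm).symm
  have hbnegR : ∀ (y : Amalg A C) (a : A) (c : C), bD y ⟨-a, -c⟩ = - bD y ⟨a, c⟩ := by
    intro y a c
    have h1 := hbR y a (-a) c (-c)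
    rw [add_neg_cancel, add_neg_cancel, hzeroR 0 h00P] at h1
    exact (neg_eq_of_add_eq_zero_right h1.symm).symm
  have hbskew : ∀ x y : Amalg A C, bD y x = - bD x y := by
    intro x y
    have h1 : bD ⟨x.a + y.a, x.c + y.c⟩ ⟨x.a + y.a, x.c + y.c⟩ = 0 := hbalt _
    rw [hbL, hbR, hbR, heta, heta, hbalt, hbalt, zero_add, add_zero] at h1
    exact (neg_eq_of_add_eq_zero_right h1).symm
  have hbk : ∀ (k : ℕ) (x y : Amalg A C), bD ⟨k • x.a, k • x.c⟩ y = k • bD x y := by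
    intro k x y
    induction k with
    | zero => rw [zero_smul, zero_smul, zero_smul]; exact hb0L y
    | succ k ih =>
        rw [succ_nsmul, succ_nsmul, hbL, ih, heta, succ_nsmul]
  have hbmulL : ∀ x y z : Amalg A C,
      bD ⟨x.a + y.a + m • bD x y, x.c + y.c⟩ z = bD x z + bD y z := by
    intro x y z
    have h1 : x.c + y.c = x.c + y.c + (0 : C) := (add_zero _).symm
    rw [h1, hbL, hbL, heta, heta, hzeroL _ (bridge_mem_smul hnsA (hbP x y) m), add_zero]
  have hbmulR : ∀ x y z : Amalg A C,
      bD z ⟨x.a + y.a + m • bD x y, x.c + y.c⟩ = bD z x + bD z y := by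
    intro x y z
    have h1 : x.c + y.c = x.c + y.c + (0 : C) := (add_zero _).symm
    rw [h1, hbR, hbR, heta, heta, hzeroR _ (bridge_mem_smul hnsA (hbP x y) m), add_zero]
  -- the group structure on the amalgam
  letI iD : Group (Amalg A C) :=
    { mul := fun x y => ⟨x.a + y.a + m • bD x y, x.c + y.c⟩
      one := ⟨0, 0⟩
      inv := fun x => ⟨-x.a, -x.c⟩
      mul_assoc := by
        intro x y z
        show (⟨(x.a + y.a + m • bD x y) + z.a
                + m • bD ⟨x.a + y.a + m • bD x y, x.c + y.c⟩ z, (x.c + y.c) + z.c⟩ : Amalg A C)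
            = ⟨x.a + (y.a + z.a + m • bD y z)
                + m • bD x ⟨y.a + z.a + m • bD y z, y.c + z.c⟩, x.c + (y.c + z.c)⟩
        rw [hbmulL, hbmulR, smul_add, smul_add]
        congr 1
        · abel
        · abel
      one_mul := by
        intro x
        show (⟨(0 : A) + x.a + m • bD ⟨0, 0⟩ x, (0 : C) + x.c⟩ : Amalg A C) = x
        rw [hb0L, smul_zero, add_zero, zero_add, zero_add, heta]
      mul_one := by
        intro x
        show (⟨x.a + (0 : A) + m • bD x ⟨0, 0⟩, x.c + (0 : C)⟩ : Amalg A C) = x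
        rw [hzeroR 0 h00P, smul_zero, add_zero, add_zero, add_zero, heta]
      inv_mul_cancel := by
        intro x
        show (⟨-x.a + x.a + m • bD ⟨-x.a, -x.c⟩ x, -x.c + x.c⟩ : Amalg A C) = ⟨0, 0⟩
        rw [hbneg, heta, hbalt, neg_zero, smul_zero, add_zero, neg_add_cancel,
          neg_add_cancel] }
  letI iFD : Finite (Amalg A C) :=
    Finite.of_equiv (A × C) ⟨fun z => ⟨z.1, z.2⟩, fun x => (x.a, x.c), fun _ => rfl, fun _ => rfl⟩
  have hmulD : ∀ x y : Amalg A C, x * y = ⟨x.a + y.a + m • bD x y, x.c + y.c⟩ := fun _ _ => rfl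
  have honeD : (1 : Amalg A C) = ⟨0, 0⟩ := rfl
  have hmm2 : ∀ b : A, m • b + m • b = b := fun b => by
    rw [← add_nsmul, ← two_mul, h2m, add_nsmul, hpA, zero_add, one_nsmul]
  have hcentD : ∀ w ∈ PA, ∀ z : Amalg A C, z * ⟨w, 0⟩ = (⟨w, 0⟩ : Amalg A C) * z := by
    intro w hw z
    rw [hmulD, hmulD, hzeroR w hw, hzeroL w hw, smul_zero, add_zero, add_zero,
      add_comm z.a w, add_zero, zero_add]
  have hxyD : ∀ x y : Amalg A C, x * y = (y * x) * ⟨bD x y, 0⟩ := by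
    intro x y
    rw [hmulD x y, hmulD y x, hmulD]
    show (⟨x.a + y.a + m • bD x y, x.c + y.c⟩ : Amalg A C)
        = ⟨(y.a + x.a + m • bD y x) + bD x y
            + m • bD ⟨y.a + x.a + m • bD y x, y.c + x.c⟩ ⟨bD x y, 0⟩, (y.c + x.c) + 0⟩
    rw [hzeroR _ (hbP x y), smul_zero, add_zero, add_zero, hbskew x y, smul_neg]
    nth_rewrite 3 [← hmm2 (bD x y)]
    congr 1
    · abel
    · abel
  have hcomD : ∀ x y : Amalg A C, ⁅x, y⁆ = ⟨bD x y, 0⟩ := by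
    intro x y
    rw [commutatorElement_def, hxyD x y, mul_assoc (y * x) _ x⁻¹,
      ← hcentD _ (hbP x y) x⁻¹, ← mul_assoc, mul_inv_cancel_right, mul_assoc,
      ← hcentD _ (hbP x y) y⁻¹, ← mul_assoc, mul_inv_cancel, one_mul]
  have hpowD : ∀ (k : ℕ) (x : Amalg A C), x ^ k = ⟨k • x.a, k • x.c⟩ := by
    intro k x
    induction k with
    | zero => rw [pow_zero, honeD, zero_smul, zero_smul]
    | succ k ih =>
        rw [pow_succ, ih, hmulD]
        show (⟨k • x.a + x.a + m • bD ⟨k • x.a, k • x.c⟩ x, k • x.c + x.c⟩ : Amalg A C) = _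
        rw [hbk, hbalt, smul_zero, smul_zero, add_zero, ← succ_nsmul, ← succ_nsmul]
  have hexpD : ∀ x : Amalg A C, x ^ p = 1 := fun x => by
    rw [hpowD, hpA, hpC, honeD]
  -- the embeddings
  have hmulA' := bridge_mul_eq_add m haddA hcA hnsA
  have hmulC' := bridge_mul_eq_add m haddC hcC hnsC
  have hbff : ∀ a b : A, bD ⟨a, 0⟩ ⟨b, 0⟩ = ⁅a, b⁆ := by
    intro a b
    rw [hbDdef]
    dsimp only
    rw [hq0, bridge_comm_zero_right hzC, bridge_comm_zero_right hzC,
      bridge_comm_zero_right hzC]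
    simp [hfr0, hf0]
  let f' : A →* Amalg A C := MonoidHom.mk' (fun a => ⟨a, 0⟩) (by
    intro a b
    show (⟨a * b, (0 : C)⟩ : Amalg A C) = (⟨a, 0⟩ : Amalg A C) * ⟨b, 0⟩
    rw [hmulD]
    show (⟨a * b, (0 : C)⟩ : Amalg A C) = ⟨a + b + m • bD ⟨a, 0⟩ ⟨b, 0⟩, (0 : C) + 0⟩
    rw [hbff, hmulA', zero_add])
  have hfr_smul : ∀ (k : ℕ) (u : C), f (r (k • u)) = k • f (r u) := fun k u => by
    rw [map_nsmul, bridge_hom_smul hnsB hnsA f]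
  have hq_smul : ∀ (k : ℕ) (u : C), q (k • u) = k • q u := fun k u => by
    show (k • u) - g (r (k • u)) = k • (u - g (r u))
    rw [map_nsmul, bridge_hom_smul hnsB hnsC g, smul_sub]
  have hbgg : ∀ z₁ z₂ : C, bD ⟨f (r z₁), q z₁⟩ ⟨f (r z₂), q z₂⟩ = f (r ⁅z₁, z₂⁆) := by
    intro z₁ z₂
    rw [hbDdef]
    dsimp only
    rw [hqq, hqq, hsf (r z₁), hsf (r z₂), ← map_commutatorElement,
      show ⁅r z₁, r z₂⁆ = r ⁅g (r z₁), g (r z₂)⁆ from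
        (by rw [← map_commutatorElement, hrg] : r ⁅g (r z₁), g (r z₂)⁆ = ⁅r z₁, r z₂⁆).symm,
      ← hfr_add]
    congr 2
    conv_rhs => rw [← hgrq z₁, ← hgrq z₂]
    rw [bridge_comm_add_left m haddC hcC, bridge_comm_add_right m haddC hcC,
      bridge_comm_add_right m haddC hcC,
      show ⁅q z₁, g (r z₂)⁆ = -⁅g (r z₂), q z₁⁆ from bridge_comm_skew hnegC _ _]
    abel
  let g' : C →* Amalg A C := MonoidHom.mk' (fun z => ⟨f (r z), q z⟩) (by
    intro z₁ z₂
    show (⟨f (r (z₁ * z₂)), q (z₁ * z₂)⟩ : Amalg A C)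
        = (⟨f (r z₁), q z₁⟩ : Amalg A C) * ⟨f (r z₂), q z₂⟩
    rw [hmulD]
    show (⟨f (r (z₁ * z₂)), q (z₁ * z₂)⟩ : Amalg A C)
        = ⟨f (r z₁) + f (r z₂) + m • bD ⟨f (r z₁), q z₁⟩ ⟨f (r z₂), q z₂⟩, q z₁ + q z₂⟩
    rw [hbgg, hmulC' z₁ z₂, hfr_add, hfr_add, hfr_smul, hq_add, hq_add, hq_smul,
      hqP _ (hmemC z₁ z₂), smul_zero, add_zero])
  have hf'inj : Function.Injective ⇑f' := fun a b h => congrArg Amalg.a h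
  have hg'inj : Function.Injective ⇑g' := by
    intro z₁ z₂ h
    have h1 : f (r z₁) = f (r z₂) := congrArg Amalg.a h
    have h2 : q z₁ = q z₂ := congrArg Amalg.c h
    have h3 : r z₁ = r z₂ := hfinj h1
    rw [← hgrq z₁, ← hgrq z₂, h3, h2]
  have hrange : (fun i => (⟨cA i, (0 : C)⟩ : Amalg A C)) = ⇑f' ∘ cA := rfl
  have hcloseD : Subgroup.closure (Set.range fun i => (⟨cA i, (0 : C)⟩ : Amalg A C))
      = PA.map f' := by
    rw [hrange, Set.range_comp, ← MonoidHom.map_closure, ← hPAdef]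
  refine ⟨Amalg A C, iD, iFD, fun i => ⟨cA i, 0⟩, f', g', ⟨hexpD, ?_, ?_, ?_⟩, hf'inj,
    hg'inj, fun i => rfl, ?_, ?_⟩
  · rw [commutator_def]
    rw [Subgroup.commutator_le]
    rintro x - y -
    rw [hcomD, hcloseD]
    exact Subgroup.mem_map.mpr ⟨bD x y, hbP x y, rfl⟩
  · rw [Subgroup.closure_le]
    rintro w ⟨i, rfl⟩
    exact Subgroup.mem_center_iff.mpr fun z =>
      hcentD (cA i) (Subgroup.subset_closure (Set.mem_range_self i)) z
  · rw [hcloseD, ← hcardA]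
    exact (Nat.card_congr (Subgroup.equivMapOfInjective PA f' hf'inj).toEquiv).symm
  · intro i
    show (⟨f (r (cC i)), q (cC i)⟩ : Amalg A C) = ⟨cA i, 0⟩
    rw [← hgc i, hrg, hfc, hqg]
  · intro b
    show (⟨f b, (0 : C)⟩ : Amalg A C) = ⟨f (r (g b)), q (g b)⟩
    rw [hrg, hqg]
end

section
/- Let p be an odd prime and n a natural number. Let A and C be finite groups of exponent p with designated tuples c^A : Fin n → A and c^C : Fin n → C such that in each group the subgroup P generated by the tuple satisfies [G,G] ≤ P ≤ Z(G) and P has order p^n. Then there exist a finite group D of exponent p with a tuple c^D : Fin n → D satisfying the same conditions, and injective homomorphisms f' : A →* D and g' : C →* D with f'(c^A i) = c^D i = g'(c^C i) for all i. (The joint embedding property for the class K(n).) -/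
open Subgroup
open scoped IsMulCommutative

section aux

variable {p n : ℕ} [Fact p.Prime] {G : Type*} [Group G]

omit [Fact p.Prime] in
lemma pow_mod_p {x : G} (hx : x ^ p = 1) (m : ℕ) : x ^ (m % p) = x ^ m := by
  conv_rhs => rw [← Nat.div_add_mod m p]
  rw [pow_add, pow_mul, hx, one_pow, one_mul]

variable (c : Fin n → G) (hc : ∀ i, c i ∈ Subgroup.center G) (hexp : ∀ g : G, g ^ p = 1)

/-- The canonical homomorphism `(ZMod p)^n → Z(G)`, `v ↦ ∏ c i ^ v i`. -/
def psiC : Multiplicative (Fin n → ZMod p) →* Subgroup.center G where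
  toFun v := ∏ i, (⟨c i, hc i⟩ : Subgroup.center G) ^ (v.toAdd i).val
  map_one' := by simp
  map_mul' v w := by
    have heq : (∏ i, (⟨c i, hc i⟩ : Subgroup.center G) ^ (((v*w)).toAdd i).val)
        = (∏ i, (⟨c i, hc i⟩ : Subgroup.center G) ^ ((v.toAdd i).val))
          * (∏ i, (⟨c i, hc i⟩ : Subgroup.center G) ^ ((w.toAdd i).val)) := by
      rw [← Finset.prod_mul_distrib]
      refine Finset.prod_congr rfl fun i _ => ?_
      have hpc : (⟨c i, hc i⟩ : Subgroup.center G) ^ p = 1 := by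
        ext; simpa using hexp (c i)
      have h2 : ((v*w).toAdd i) = v.toAdd i + w.toAdd i := rfl
      rw [h2, ZMod.val_add, pow_mod_p hpc, pow_add]
    exact heq

lemma psiC_apply (v : Multiplicative (Fin n → ZMod p)) :
    psiC c hc hexp v = ∏ i, (⟨c i, hc i⟩ : Subgroup.center G) ^ (v.toAdd i).val := rfl

def psiHom : Multiplicative (Fin n → ZMod p) →* G :=
  (Subgroup.center G).subtype.comp (psiC c hc hexp)

lemma psiHom_apply (v : Multiplicative (Fin n → ZMod p)) :
    psiHom c hc hexp v = ((psiC c hc hexp v : Subgroup.center G) : G) := rfl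

lemma psiC_single (i : Fin n) :
    psiC c hc hexp (Multiplicative.ofAdd (Pi.single i 1)) = ⟨c i, hc i⟩ := by
  haveI : Fact (1 < p) := ⟨(Fact.out : p.Prime).one_lt⟩
  rw [psiC_apply, Finset.prod_eq_single i]
  · simp [ZMod.val_one]
  · intro j _ hj
    simp [Pi.single_eq_of_ne hj]
  · simp

lemma psiHom_single (i : Fin n) :
    psiHom c hc hexp (Multiplicative.ofAdd (Pi.single i 1)) = c i := by
  rw [psiHom_apply, psiC_single]

lemma psiHom_range : (psiHom c hc hexp).range = Subgroup.closure (Set.range c) := by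
  apply le_antisymm
  · rintro _ ⟨v, rfl⟩
    rw [psiHom_apply, psiC_apply]
    have : (∏ i, (⟨c i, hc i⟩ : Subgroup.center G) ^ (v.toAdd i).val)
        ∈ (Subgroup.closure (Set.range c)).comap (Subgroup.center G).subtype :=
      Subgroup.prod_mem _ fun i _ => Subgroup.pow_mem _
        (show ((⟨c i, hc i⟩ : Subgroup.center G) : G) ∈ Subgroup.closure (Set.range c) from
          Subgroup.subset_closure (Set.mem_range_self i)) _
    exact this
  · rw [Subgroup.closure_le]
    rintro _ ⟨i, rfl⟩
    exact ⟨Multiplicative.ofAdd (Pi.single i 1), psiHom_single c hc hexp i⟩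

lemma card_H : Nat.card (Multiplicative (Fin n → ZMod p)) = p ^ n := by
  simp [Nat.card_eq_fintype_card, ZMod.card]

lemma psiHom_injective [Finite G]
    (hcard : Nat.card (Subgroup.closure (Set.range c)) = p ^ n) :
    Function.Injective (psiHom c hc hexp) := by
  have hsurj : Function.Surjective (psiHom c hc hexp).rangeRestrict :=
    MonoidHom.rangeRestrict_surjective _
  have hcard2 : Nat.card (Multiplicative (Fin n → ZMod p))
      = Nat.card (psiHom c hc hexp).range := by
    rw [psiHom_range c hc hexp, hcard, card_H]
  have hbij := (Nat.bijective_iff_surjective_and_card (psiHom c hc hexp).rangeRestrict).mpr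
    ⟨hsurj, hcard2⟩
  exact fun a b h => hbij.injective (Subtype.ext h)

lemma card_closure_of_injective [Finite G]
    (hinj : Function.Injective (psiHom c hc hexp)) :
    Nat.card (Subgroup.closure (Set.range c)) = p ^ n := by
  rw [← psiHom_range c hc hexp]
  have h1 : Nat.card ((psiHom c hc hexp).range) = Nat.card (Set.range (psiHom c hc hexp)) := rfl
  rw [h1, Nat.card_range_of_injective hinj, card_H]

end aux


/-- The joint embedding property for the class `𝕂(n)` of finite exponent-`p` groups
`G` with `[G,G] ≤ ⟨c₁,…,cₙ⟩ ≤ Z(G)` and `c₁,…,cₙ` linearly independent. -/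
theorem joint_embedding_Kn (p n : ℕ) (hp : p.Prime) (hodd : Odd p)
    (A C : Type) [Group A] [Group C] [Finite A] [Finite C]
    (cA : Fin n → A) (cC : Fin n → C)
    (hA : MemKClass p n A cA) (hC : MemKClass p n C cC) :
    ∃ (D : Type) (_ : Group D) (_ : Finite D) (cD : Fin n → D)
      (f' : A →* D) (g' : C →* D),
      MemKClass p n D cD ∧
      Function.Injective f' ∧ Function.Injective g' ∧
      (∀ i, f' (cA i) = cD i) ∧ (∀ i, g' (cC i) = cD i) := by
  haveI : Fact p.Prime := ⟨hp⟩
  obtain ⟨hexpA, hcommA, hcentA, hcardA⟩ := hA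
  obtain ⟨hexpC, hcommC, hcentC, hcardC⟩ := hC
  have hcA : ∀ i, cA i ∈ Subgroup.center A := fun i =>
    hcentA (Subgroup.subset_closure (Set.mem_range_self i))
  have hcC : ∀ i, cC i ∈ Subgroup.center C := fun i =>
    hcentC (Subgroup.subset_closure (Set.mem_range_self i))
  set ψA := psiHom cA hcA hexpA with hψA
  set ψC := psiHom cC hcC hexpC with hψC
  have hψAinj := psiHom_injective cA hcA hexpA hcardA
  have hψCinj := psiHom_injective cC hcC hexpC hcardC
  -- the amalgamating central subgroup
  set θ : Multiplicative (Fin n → ZMod p) →* A × C :=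
    ψA.prod ((Subgroup.center C).subtype.comp (invMonoidHom.comp (psiC cC hcC hexpC))) with hθ
  have hθ_apply : ∀ v, θ v = (ψA v, (ψC v)⁻¹) := fun v => rfl
  set N := θ.range with hN
  have hNle : N ≤ Subgroup.center (A × C) := by
    rintro _ ⟨v, rfl⟩
    rw [Subgroup.mem_center_iff]
    intro g
    have h1 : ψA v ∈ Subgroup.center A := (psiC cA hcA hexpA v).2
    have h2 : (ψC v)⁻¹ ∈ Subgroup.center C :=
      (Subgroup.center C).inv_mem (psiC cC hcC hexpC v).2
    rw [hθ_apply]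
    exact Prod.ext (Subgroup.mem_center_iff.mp h1 g.1) (Subgroup.mem_center_iff.mp h2 g.2)
  haveI hNnormal : N.Normal := by
    constructor
    intro x hx g
    have hcen := Subgroup.mem_center_iff.mp (hNle hx)
    have : g * x * g⁻¹ = x := by rw [hcen g, mul_assoc, mul_inv_cancel, mul_one]
    rwa [this]
  refine ⟨(A × C) ⧸ N, inferInstance, inferInstance, ?_⟩
  set π := QuotientGroup.mk' N with hπ
  have hπsurj : Function.Surjective π := QuotientGroup.mk'_surjective N
  set f' := π.comp (MonoidHom.inl A C) with hf'
  set g' := π.comp (MonoidHom.inr A C) with hg'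
  set cD : Fin n → (A × C) ⧸ N := fun i => f' (cA i) with hcD_def
  -- key relation: π (1, ψC v) = π (ψA v, 1)
  have hrel : ∀ v, π (1, ψC v) = π (ψA v, 1) := by
    intro v
    rw [hπ, QuotientGroup.mk'_apply, QuotientGroup.mk'_apply, QuotientGroup.eq]
    refine ⟨v, ?_⟩
    rw [hθ_apply]
    exact Prod.ext (by simp) (by simp)
  -- exponent p for the quotient
  have hexpD : ∀ d : (A × C) ⧸ N, d ^ p = 1 := by
    intro d
    obtain ⟨x, rfl⟩ := hπsurj d
    rw [← map_pow]
    have hx : x ^ p = 1 := by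
      ext
      · simpa using hexpA x.1
      · simpa using hexpC x.2
    rw [hx, map_one]
  -- images of central elements are central
  have hcent_img : ∀ x : A × C, x ∈ Subgroup.center (A × C) →
      π x ∈ Subgroup.center ((A × C) ⧸ N) := by
    intro x hx
    rw [Subgroup.mem_center_iff]
    intro d
    obtain ⟨y, rfl⟩ := hπsurj d
    rw [← map_mul, ← map_mul, Subgroup.mem_center_iff.mp hx y]
  have hpairA : ∀ a : A, a ∈ Subgroup.center A → ((a, 1) : A × C) ∈ Subgroup.center (A × C) := by
    intro a ha
    rw [Subgroup.mem_center_iff]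
    intro g
    exact Prod.ext (Subgroup.mem_center_iff.mp ha g.1) (by simp)
  have hcD : ∀ i, cD i ∈ Subgroup.center ((A × C) ⧸ N) := fun i =>
    hcent_img _ (hpairA (cA i) (hcA i))
  -- injectivity of f'
  have hker : ∀ x : A × C, π x = 1 → ∃ v, ψA v = x.1 ∧ (ψC v)⁻¹ = x.2 := by
    intro x hx
    rw [hπ, QuotientGroup.mk'_apply, QuotientGroup.eq_one_iff] at hx
    obtain ⟨v, hv⟩ := hx
    rw [hθ_apply] at hv
    exact ⟨v, congrArg Prod.fst hv, congrArg Prod.snd hv⟩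
  have hf'inj : Function.Injective f' := by
    rw [← f'.ker_eq_bot_iff, eq_bot_iff]
    intro a ha
    rw [MonoidHom.mem_ker] at ha
    obtain ⟨v, hv1, hv2⟩ := hker (a, 1) ha
    have hv0 : v = 1 := hψCinj (by rw [map_one]; rwa [inv_eq_one] at hv2)
    rw [hv0, map_one] at hv1
    simpa using hv1.symm
  have hg'inj : Function.Injective g' := by
    rw [← g'.ker_eq_bot_iff, eq_bot_iff]
    intro c hc
    rw [MonoidHom.mem_ker] at hc
    obtain ⟨v, hv1, hv2⟩ := hker (1, c) hc
    have hv0 : v = 1 := hψAinj (by rw [map_one]; exact hv1)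
    rw [hv0, map_one, inv_one] at hv2
    simpa using hv2.symm
  -- the pushed-forward homomorphism on centers and naturality
  set f'c : Subgroup.center A →* Subgroup.center ((A × C) ⧸ N) :=
    { toFun := fun x => ⟨f' x, hcent_img _ (hpairA x x.2)⟩
      map_one' := by ext; simp
      map_mul' := fun x y => by ext; simp } with hf'c
  have hnat : ∀ v, psiHom cD hcD hexpD v = f' (ψA v) := by
    intro v
    have h1 : psiC cD hcD hexpD v = f'c (psiC cA hcA hexpA v) := by
      rw [psiC_apply, psiC_apply, map_prod]
      refine Finset.prod_congr rfl fun i _ => ?_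
      rw [map_pow]
      rfl
    rw [psiHom_apply, h1, hψA, psiHom_apply]
    rfl
  have hψDinj : Function.Injective (psiHom cD hcD hexpD) := by
    intro v w h
    rw [hnat, hnat] at h
    exact hψAinj (hf'inj h)
  -- cardinality of the closure in D
  have hcardD := card_closure_of_injective cD hcD hexpD hψDinj
  -- center condition
  have hcentD : Subgroup.closure (Set.range cD) ≤ Subgroup.center ((A × C) ⧸ N) := by
    rw [Subgroup.closure_le]
    rintro _ ⟨i, rfl⟩
    exact hcD i
  -- commutator condition
  have hmemD : ∀ v, π (ψA v, 1) ∈ Subgroup.closure (Set.range cD) := by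
    intro v
    have : psiHom cD hcD hexpD v ∈ Subgroup.closure (Set.range cD) := by
      rw [← psiHom_range cD hcD hexpD]
      exact ⟨v, rfl⟩
    rwa [hnat] at this
  have hcommD : commutator ((A × C) ⧸ N) ≤ Subgroup.closure (Set.range cD) := by
    have h1 : commutator ((A × C) ⧸ N) = Subgroup.map π (commutator (A × C)) := by
      rw [_root_.commutator_def, _root_.commutator_def, Subgroup.map_commutator,
        Subgroup.map_top_of_surjective π hπsurj]
    have h2 : commutator (A × C) ≤
        (Subgroup.closure (Set.range cA)).prod (Subgroup.closure (Set.range cC)) := by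
      rw [_root_.commutator_def, ← Subgroup.top_prod_top, Subgroup.commutator_prod_prod]
      exact Subgroup.prod_mono hcommA hcommC
    rw [h1]
    refine (Subgroup.map_mono h2).trans ?_
    rintro _ ⟨⟨a, c⟩, ⟨ha, hc⟩, rfl⟩
    obtain ⟨v, hv⟩ : ∃ v, ψA v = a := by
      rw [hψA]; rw [← psiHom_range cA hcA hexpA] at ha; exact ha
    obtain ⟨w, hw⟩ : ∃ w, ψC w = c := by
      rw [hψC]; rw [← psiHom_range cC hcC hexpC] at hc; exact hc
    have hsplit : ((a, c) : A × C) = (a, 1) * (1, c) := by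
      ext <;> simp
    rw [hsplit, map_mul]
    refine Subgroup.mul_mem _ ?_ ?_
    · rw [← hv]; exact hmemD v
    · rw [← hw, hrel w]; exact hmemD w
  -- the tuple equations
  have hgeq : ∀ i, g' (cC i) = cD i := by
    intro i
    have h1 : g' (cC i) = π (1, cC i) := rfl
    have h2 : cD i = π (cA i, 1) := rfl
    rw [h1, h2, ← psiHom_single cC hcC hexpC i, ← hψC,
      hrel (Multiplicative.ofAdd (Pi.single i 1)), hψA, psiHom_single cA hcA hexpA i]
  exact ⟨cD, f', g', ⟨hexpD, hcommD, hcentD, hcardD⟩, hf'inj, hg'inj, fun i => rfl, hgeq⟩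
end

section
/- Let p be a prime, n a natural number, and let G be a group of exponent p with a subgroup P such that [G,G] ≤ P ≤ Z(G) and P has cardinality p^n. Then for every a ∈ G there exists a finite subset E ⊆ G with |E| ≤ n such that G = ⟨{a} ∪ E⟩ · C_G(a), i.e., every g ∈ G can be written as g = h·k with h in the subgroup generated by {a} ∪ E and k in the centralizer C_G(a). (G is the central product of ⟨a, E_a⟩ and C(a).) -/
theorem gen_lemma (p : ℕ) (hp : p.Prime) :
    ∀ (n : ℕ) (Q : Type) [CommGroup Q], Nat.card Q ∣ p ^ n → (∀ q : Q, q ^ p = 1) →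
      ∃ S : Finset Q, S.card ≤ n ∧ Subgroup.closure (S : Set Q) = ⊤ := by
  intro n
  induction n with
  | zero =>
    intro Q _ hdvd _
    have h1 : Nat.card Q = 1 := Nat.eq_one_of_dvd_one (by simpa using hdvd)
    have : Subsingleton Q := (Nat.card_eq_one_iff_unique.mp h1).1
    exact ⟨∅, le_refl 0, by
      rw [eq_top_iff]; intro q _
      have : q = 1 := Subsingleton.elim q 1
      simp [this]⟩
  | succ n ih =>
    intro Q _ hdvd hexp
    by_cases hone : Nat.card Q = 1
    · have : Subsingleton Q := (Nat.card_eq_one_iff_unique.mp hone).1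
      exact ⟨∅, Nat.zero_le _, by
        rw [eq_top_iff]; intro q _
        have : q = 1 := Subsingleton.elim q 1
        simp [this]⟩
    · classical
      have hpos : 0 < Nat.card Q := Nat.pos_of_ne_zero fun h0 => by
        rw [h0] at hdvd
        exact (pow_pos hp.pos (n+1)).ne' (Nat.eq_zero_of_zero_dvd hdvd)
      have hfin : Finite Q := (Nat.card_pos_iff.mp hpos).2
      have hnt : Nontrivial Q := Finite.one_lt_card_iff_nontrivial.mp
        (lt_of_le_of_ne hpos (Ne.symm hone))
      obtain ⟨x, hx⟩ := exists_ne (1 : Q)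
      have hord : orderOf x = p := by
        have h1 : orderOf x ∣ p := orderOf_dvd_of_pow_eq_one (hexp x)
        rcases (Nat.Prime.eq_one_or_self_of_dvd hp _ h1) with h | h
        · exact absurd (orderOf_eq_one_iff.mp h) hx
        · exact h
      set N := Subgroup.zpowers x with hN
      have hNcard : Nat.card N = p := by rw [Nat.card_zpowers, hord]
      have hcardeq : Nat.card Q = Nat.card (Q ⧸ N) * p := by
        rw [Subgroup.card_eq_card_quotient_mul_card_subgroup N, hNcard]
      have hdvd' : Nat.card (Q ⧸ N) ∣ p ^ n := by
        have : Nat.card (Q ⧸ N) * p ∣ p ^ n * p := by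
          rw [← hcardeq, ← pow_succ]; exact hdvd
        exact (Nat.mul_dvd_mul_iff_right hp.pos).mp this
      have hexp' : ∀ q : Q ⧸ N, q ^ p = 1 := by
        intro q
        induction q using QuotientGroup.induction_on with
        | _ z => rw [← QuotientGroup.mk_pow, hexp z, QuotientGroup.mk_one]
      obtain ⟨S', hS'card, hS'top⟩ := ih (Q ⧸ N) hdvd' hexp'
      refine ⟨insert x (S'.image Quotient.out), ?_, ?_⟩
      · calc (insert x (S'.image Quotient.out)).card
            ≤ (S'.image Quotient.out).card + 1 := Finset.card_insert_le _ _
          _ ≤ S'.card + 1 := by gcongr; exact Finset.card_image_le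
          _ ≤ n + 1 := by omega
      · set H := Subgroup.closure ((insert x (S'.image Quotient.out) : Finset Q) : Set Q) with hH
        have hxH : x ∈ H := Subgroup.subset_closure (by simp)
        have hNH : N ≤ H := by
          rw [hN, Subgroup.zpowers_le]; exact hxH
        have hmap : Subgroup.map (QuotientGroup.mk' N) H = ⊤ := by
          rw [hH, MonoidHom.map_closure, eq_top_iff, ← hS'top]
          apply Subgroup.closure_mono
          intro q hq
          refine ⟨Quotient.out q, ?_, QuotientGroup.out_eq' q⟩
          simp only [Finset.coe_insert, Set.mem_insert_iff, Finset.coe_image]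
          exact Or.inr ⟨q, hq, rfl⟩
        have := Subgroup.comap_map_eq (QuotientGroup.mk' N) H
        rw [hmap, Subgroup.comap_top, QuotientGroup.ker_mk'] at this
        rw [eq_top_iff, this]
        exact sup_le le_rfl hNH

open scoped commutatorElement

/-- In a group `G` of exponent `p` with `[G,G] ≤ P ≤ Z(G)` and `|P| = p^n`, every
element `a` admits a finite set `E` of at most `n` elements such that
`G = ⟨a, E⟩ · C_G(a)`: `G` is the central product of `⟨a, E_a⟩` and `C(a)`. -/
theorem central_product_decomposition (p n : ℕ) (hp : p.Prime)
    (G : Type) [Group G] (hexp : ∀ g : G, g ^ p = 1)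
    (P : Subgroup G) (hcomm : commutator G ≤ P) (hcent : P ≤ Subgroup.center G)
    (hPcard : Nat.card P = p ^ n) (a : G) :
    ∃ E : Finset G, E.card ≤ n ∧
      ∀ g : G, ∃ h k : G,
        h ∈ Subgroup.closure ({a} ∪ (E : Set G)) ∧
        k ∈ Subgroup.centralizer {a} ∧
        g = h * k := by
  classical
  -- every commutator with a is central
  have hc : ∀ g : G, ⁅a, g⁆ ∈ Subgroup.center G := fun g =>
    hcent (hcomm (by rw [commutator_def]; exact Subgroup.commutator_mem_commutator trivial trivial))
  -- the map g ↦ ⁅a, g⁆ is a homomorphism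
  have key : ∀ g h : G, ⁅a, g * h⁆ = ⁅a, g⁆ * ⁅a, h⁆ := by
    intro g h
    have h1 : ⁅a, g * h⁆ = ⁅a, g⁆ * (g * ⁅a, h⁆ * g⁻¹) := by group
    rw [h1, Subgroup.mem_center_iff.mp (hc h) g]
    group
  set φ : G →* G := ⟨⟨fun g => ⁅a, g⁆, by group⟩, key⟩ with hφ
  have hφval : ∀ g : G, φ g = ⁅a, g⁆ := fun g => rfl
  -- the range of φ lies in P, hence is commutative
  have hrange : φ.range ≤ P := by
    rintro _ ⟨g, rfl⟩
    exact hcomm (by rw [commutator_def]; exact Subgroup.commutator_mem_commutator trivial trivial)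
  letI : CommGroup ↥φ.range :=
    { (inferInstance : Group ↥φ.range) with
      mul_comm := fun q r => Subtype.ext (by
        push_cast
        exact (Subgroup.mem_center_iff.mp (hcent (hrange q.2)) r).symm) }
  have hfinP : Finite ↥P := Nat.finite_of_card_ne_zero (by
    rw [hPcard]; exact (pow_pos hp.pos n).ne')
  have hdvd : Nat.card ↥φ.range ∣ p ^ n := hPcard ▸ Subgroup.card_dvd_of_le hrange
  have hexpQ : ∀ q : ↥φ.range, q ^ p = 1 := fun q => Subtype.ext (by
    push_cast
    exact hexp (q : G))
  obtain ⟨S, hScard, hStop⟩ := gen_lemma p hp n ↥φ.range hdvd hexpQ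
  -- preimages of the generators
  have hpre : ∀ q : ↥φ.range, ∃ g : G, φ g = (q : G) := fun q => q.2
  choose f hf using hpre
  refine ⟨S.image f, le_trans Finset.card_image_le hScard, ?_⟩
  set E := S.image f with hE
  set H := Subgroup.closure ((E : Finset G) : Set G) with hH
  -- every element of the range of φ is hit by φ on H
  have hcover : ∀ q : ↥φ.range, (q : G) ∈ Subgroup.map φ H := by
    intro q
    have hq : q ∈ Subgroup.closure (S : Set ↥φ.range) := hStop ▸ Subgroup.mem_top q
    induction hq using Subgroup.closure_induction with
    | mem s hs =>
      refine ⟨f s, Subgroup.subset_closure ?_, hf s⟩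
      rw [hE, Finset.coe_image]
      exact ⟨s, hs, rfl⟩
    | one => exact ⟨1, H.one_mem, by simp⟩
    | mul x y hx hy ihx ihy =>
      obtain ⟨u, hu, hu2⟩ := ihx
      obtain ⟨v, hv, hv2⟩ := ihy
      exact ⟨u * v, H.mul_mem hu hv, by rw [map_mul, hu2, hv2]; rfl⟩
    | inv x hx ihx =>
      obtain ⟨u, hu, hu2⟩ := ihx
      exact ⟨u⁻¹, H.inv_mem hu, by rw [map_inv, hu2]; rfl⟩
  intro g
  obtain ⟨h, hhH, hφh⟩ := hcover ⟨φ g, ⟨g, rfl⟩⟩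
  refine ⟨h, h⁻¹ * g, ?_, ?_, by group⟩
  · exact Subgroup.closure_mono (Set.subset_union_right) hhH
  · rw [Subgroup.mem_centralizer_singleton_iff]
    have h1 : φ (h⁻¹ * g) = 1 := by
      rw [map_mul, map_inv, hφh]
      simp
    rw [hφval] at h1
    exact (commutatorElement_eq_one_iff_mul_comm.mp h1).symm
end

section
/- Let p be a prime and let G be a group of exponent p with a finite subgroup P such that [G,G] ≤ P ≤ Z(G). Suppose the quotient G/Z(G) is infinite. Then there exist sequences d, e : ℕ → G such that ⁅d i, e i⁆ ≠ 1 for every i, and ⁅d i, d j⁆ = 1, ⁅e i, e j⁆ = 1, and ⁅d i, e j⁆ = 1 for all i ≠ j. -/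
open scoped commutatorElement

section Aux

variable {G : Type} [Group G] {P : Subgroup G}

lemma aux_comm_mem (hcomm : commutator G ≤ P) (x y : G) : ⁅x, y⁆ ∈ P :=
  hcomm (Subgroup.commutator_mem_commutator (Subgroup.mem_top x) (Subgroup.mem_top y))

lemma aux_centralizer_singleton_fi (hPfin : Finite P)
    (hcomm : commutator G ≤ P) (hcent : P ≤ Subgroup.center G) (g : G) :
    (Subgroup.centralizer {g}).FiniteIndex := by
  let φ : G →* P :=
    { toFun := fun x => ⟨⁅x, g⁆, aux_comm_mem hcomm x g⟩
      map_one' := by ext; simp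
      map_mul' := by
        intro x y
        ext
        have hz : ∀ a : G, a * ⁅y, g⁆ = ⁅y, g⁆ * a := fun a =>
          Subgroup.mem_center_iff.mp (hcent (aux_comm_mem hcomm y g)) a
        show ⁅x * y, g⁆ = ⁅x, g⁆ * ⁅y, g⁆
        calc ⁅x * y, g⁆ = x * ⁅y, g⁆ * (g * x⁻¹ * g⁻¹) := by
              rw [commutatorElement_def, commutatorElement_def]; group
          _ = ⁅y, g⁆ * x * (g * x⁻¹ * g⁻¹) := by rw [hz x]
          _ = ⁅y, g⁆ * ⁅x, g⁆ := by
              rw [commutatorElement_def, commutatorElement_def]; group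
          _ = ⁅x, g⁆ * ⁅y, g⁆ := (hz ⁅x, g⁆).symm }
  have hker : φ.ker = Subgroup.centralizer {g} := by
    ext x
    constructor
    · intro h
      rw [Subgroup.mem_centralizer_iff]
      intro a ha
      rw [Set.mem_singleton_iff] at ha
      subst ha
      have h1 : ⁅x, a⁆ = 1 := congrArg Subtype.val h
      exact (commutatorElement_eq_one_iff_commute.mp h1).symm.eq
    · intro h
      have h1 : g * x = x * g := Subgroup.mem_centralizer_iff.mp h g rfl
      exact Subtype.ext (commutatorElement_eq_one_iff_commute.mpr h1.symm)
  rw [← hker]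
  exact Subgroup.finiteIndex_ker φ

lemma aux_centralizer_list_fi (hPfin : Finite P)
    (hcomm : commutator G ≤ P) (hcent : P ≤ Subgroup.center G) (l : List G) :
    (Subgroup.centralizer {x | x ∈ l}).FiniteIndex := by
  induction l with
  | nil =>
    have : Subgroup.centralizer {x : G | x ∈ ([] : List G)} = ⊤ := by
      ext x; simp [Subgroup.mem_centralizer_iff]
    rw [this]; infer_instance
  | cons a l ih =>
    have heq : Subgroup.centralizer {x : G | x ∈ a :: l} =
        Subgroup.centralizer {a} ⊓ Subgroup.centralizer {x : G | x ∈ l} := by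
      ext x
      simp only [Subgroup.mem_inf, Subgroup.mem_centralizer_iff, Set.mem_setOf_eq,
        Set.mem_singleton_iff, List.mem_cons]
      constructor
      · intro h; exact ⟨fun b hb => h b (Or.inl hb), fun b hb => h b (Or.inr hb)⟩
      · rintro ⟨h1, h2⟩ b (hb | hb); exacts [h1 b hb, h2 b hb]
    rw [heq]
    haveI := aux_centralizer_singleton_fi hPfin hcomm hcent a
    haveI := ih
    infer_instance

lemma aux_key (hPfin : Finite P)
    (hcomm : commutator G ≤ P) (hcent : P ≤ Subgroup.center G)
    (hinf : Infinite (G ⧸ Subgroup.center G))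
    (K : Subgroup G) (hK : K.FiniteIndex) :
    ∃ x ∈ K, ∃ y ∈ K, ⁅x, y⁆ ≠ 1 := by
  by_contra hcon
  push_neg at hcon
  have habel : ∀ x ∈ K, ∀ y ∈ K, Commute x y := fun x hx y hy =>
    commutatorElement_eq_one_iff_commute.mp (hcon x hx y hy)
  haveI := hK
  haveI : Finite (G ⧸ K) := Subgroup.finite_quotient_of_finiteIndex (H := K)
  set L : Subgroup G := K ⊓ ⨅ q : G ⧸ K, Subgroup.centralizer {Quotient.out q} with hL
  have hLfi : L.FiniteIndex := by
    haveI : (⨅ q : G ⧸ K, Subgroup.centralizer {Quotient.out q}).FiniteIndex :=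
      Subgroup.finiteIndex_iInf fun q =>
        aux_centralizer_singleton_fi hPfin hcomm hcent (Quotient.out q)
    infer_instance
  have hLcen : L ≤ Subgroup.center G := by
    intro x hx
    rw [Subgroup.mem_center_iff]
    intro g
    obtain ⟨hxK, hxI⟩ := Subgroup.mem_inf.mp hx
    obtain ⟨k, hk⟩ := QuotientGroup.mk_out_eq_mul K g
    have hrep : g = Quotient.out ((g : G ⧸ K)) * (k : G)⁻¹ := by
      rw [hk]; group
    have h1 : Commute x (Quotient.out ((g : G ⧸ K))) := by
      have h1' := Subgroup.mem_iInf.mp hxI ((g : G ⧸ K))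
      exact (Subgroup.mem_centralizer_iff.mp h1' _ rfl).symm
    have h2 : Commute x ((k : G)⁻¹) := habel x hxK _ (K.inv_mem k.2)
    rw [hrep]
    exact (h1.mul_right h2).symm.eq
  haveI hcfi : (Subgroup.center G).FiniteIndex := Subgroup.finiteIndex_of_le hLcen
  haveI : Finite (G ⧸ Subgroup.center G) :=
    Subgroup.finite_quotient_of_finiteIndex (H := Subgroup.center G)
  exact (Infinite.not_finite this)

end Aux

/-- In a group `G` of exponent `p` with a finite subgroup `P` satisfying
`[G,G] ≤ P ≤ Z(G)` and with `G/Z(G)` infinite, there are sequences `d, e : ℕ → G`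
with `⁅d i, e i⁆ ≠ 1` for all `i`, while all other pairs of chosen elements
commute. -/
theorem exists_noncommuting_sequences (p : ℕ) (hp : p.Prime)
    (G : Type) [Group G] (hexp : ∀ g : G, g ^ p = 1)
    (P : Subgroup G) (hPfin : Finite P)
    (hcomm : commutator G ≤ P) (hcent : P ≤ Subgroup.center G)
    (hinf : Infinite (G ⧸ Subgroup.center G)) :
    ∃ d e : ℕ → G,
      (∀ i : ℕ, ⁅d i, e i⁆ ≠ 1) ∧
      (∀ i j : ℕ, i ≠ j → ⁅d i, d j⁆ = 1 ∧ ⁅e i, e j⁆ = 1 ∧ ⁅d i, e j⁆ = 1) := by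
  have key : ∀ l : List G, ∃ x y : G,
      (∀ a ∈ l, Commute x a ∧ Commute y a) ∧ ⁅x, y⁆ ≠ 1 := by
    intro l
    obtain ⟨x, hx, y, hy, hxy⟩ := aux_key hPfin hcomm hcent hinf
      (Subgroup.centralizer {a | a ∈ l})
      (aux_centralizer_list_fi hPfin hcomm hcent l)
    refine ⟨x, y, fun a ha => ⟨?_, ?_⟩, hxy⟩
    · exact (Subgroup.mem_centralizer_iff.mp hx a ha).symm
    · exact (Subgroup.mem_centralizer_iff.mp hy a ha).symm
  choose X Y hC hN using key
  set L : ℕ → List G := fun n => Nat.rec [] (fun m l => X l :: Y l :: l) n with hLdef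
  have hLsucc : ∀ n, L (n + 1) = X (L n) :: Y (L n) :: L n := fun n => rfl
  have hmono : ∀ m n, m ≤ n → ∀ a ∈ L m, a ∈ L n := by
    intro m n h
    induction h with
    | refl => exact fun a ha => ha
    | step h ih =>
      rename_i n'
      intro a ha
      rw [hLsucc n']
      exact List.mem_cons_of_mem _ (List.mem_cons_of_mem _ (ih a ha))
  refine ⟨fun n => X (L n), fun n => Y (L n), fun i => hN (L i), ?_⟩
  have hmemX : ∀ m n, m < n → X (L m) ∈ L n := fun m n h =>
    hmono (m + 1) n h _ (by rw [hLsucc m]; exact List.mem_cons_self)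
  have hmemY : ∀ m n, m < n → Y (L m) ∈ L n := fun m n h =>
    hmono (m + 1) n h _ (by rw [hLsucc m]; exact List.mem_cons_of_mem _ List.mem_cons_self)
  intro i j hij
  rcases lt_or_gt_of_ne hij with h | h
  · refine ⟨?_, ?_, ?_⟩
    · exact commutatorElement_eq_one_iff_commute.mpr
        ((hC (L j) _ (hmemX i j h)).1.symm)
    · exact commutatorElement_eq_one_iff_commute.mpr
        ((hC (L j) _ (hmemY i j h)).2.symm)
    · exact commutatorElement_eq_one_iff_commute.mpr
        ((hC (L j) _ (hmemX i j h)).2.symm)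
  · refine ⟨?_, ?_, ?_⟩
    · exact commutatorElement_eq_one_iff_commute.mpr
        (hC (L i) _ (hmemX j i h)).1
    · exact commutatorElement_eq_one_iff_commute.mpr
        (hC (L i) _ (hmemY j i h)).2
    · exact commutatorElement_eq_one_iff_commute.mpr
        (hC (L i) _ (hmemY j i h)).1
end

section
/- Let p be a prime and let G be a group of exponent p with a finite subgroup P such that [G,G] ≤ P ≤ Z(G). Suppose the quotient G/Z(G) is infinite. Then there exist an element c ∈ G with c ≠ 1 and sequences d, e : ℕ → G such that ⁅d i, e i⁆ = c for every i, and ⁅d i, d j⁆ = 1, ⁅e i, e j⁆ = 1, and ⁅d i, e j⁆ = 1 for all i ≠ j. (Equivalently, Felgner's extraspecial group D(1) — the central product over ⟨c⟩ of infinitely many copies of the exponent-p Heisenberg group — embeds into G; Theorem 4.2(i).) -/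
open scoped commutatorElement

section Aux

variable {G : Type} [Group G] {P : Subgroup G}

/-- Given that all commutators lie in a central subgroup `P`, the map `g ↦ ⁅g, x⁆`
is a homomorphism into `P`. -/
def commHom (hmem : ∀ g x : G, ⁅g, x⁆ ∈ P) (hcen : ∀ g x z : G, z * ⁅g, x⁆ = ⁅g, x⁆ * z)
    (x : G) : G →* P where
  toFun g := ⟨⁅g, x⁆, hmem g x⟩
  map_one' := by ext; simp
  map_mul' g h := by
    ext
    show ⁅g * h, x⁆ = ⁅g, x⁆ * ⁅h, x⁆
    have h1 : h * x * h⁻¹ = ⁅h, x⁆ * x := by group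
    calc ⁅g * h, x⁆ = g * (h * x * h⁻¹) * g⁻¹ * x⁻¹ := by group
      _ = g * (⁅h, x⁆ * x) * g⁻¹ * x⁻¹ := by rw [h1]
      _ = (g * ⁅h, x⁆) * (x * g⁻¹ * x⁻¹) := by group
      _ = (⁅h, x⁆ * g) * (x * g⁻¹ * x⁻¹) := by rw [← hcen h x g]
      _ = ⁅h, x⁆ * ⁅g, x⁆ := by group
      _ = ⁅g, x⁆ * ⁅h, x⁆ := hcen g x _

end Aux

/-- In a group `G` of exponent `p` with a finite subgroup `P` satisfying
`[G,G] ≤ P ≤ Z(G)` and with `G/Z(G)` infinite, there are a fixed `c ≠ 1` and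
sequences `d, e : ℕ → G` with `⁅d i, e i⁆ = c` for all `i` while all other pairs
commute — i.e. Felgner's extraspecial group `D(1)` embeds into `G`
(Theorem 4.2(i)). -/
theorem exists_heisenberg_sequences (p : ℕ) (hp : p.Prime)
    (G : Type) [Group G] (hexp : ∀ g : G, g ^ p = 1)
    (P : Subgroup G) (hPfin : Finite P)
    (hcomm : commutator G ≤ P) (hcent : P ≤ Subgroup.center G)
    (hinf : Infinite (G ⧸ Subgroup.center G)) :
    ∃ (c : G) (d e : ℕ → G),
      c ≠ 1 ∧
      (∀ i : ℕ, ⁅d i, e i⁆ = c) ∧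
      (∀ i j : ℕ, i ≠ j → ⁅d i, d j⁆ = 1 ∧ ⁅e i, e j⁆ = 1 ∧ ⁅d i, e j⁆ = 1) := by
  classical
  have hmem : ∀ g x : G, ⁅g, x⁆ ∈ P := fun g x =>
    hcomm (Subgroup.commutator_mem_commutator (Subgroup.mem_top g) (Subgroup.mem_top x))
  have hcen : ∀ g x z : G, z * ⁅g, x⁆ = ⁅g, x⁆ * z := fun g x z =>
    Subgroup.mem_center_iff.mp (hcent (hmem g x)) z
  set φ : G → G →* P := commHom hmem hcen with hφ
  set Cx : G → Subgroup G := fun x => (φ x).ker with hCxdef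
  have hCx : ∀ x g : G, g ∈ Cx x ↔ ⁅g, x⁆ = 1 := by
    intro x g
    rw [hCxdef]
    simp only [MonoidHom.mem_ker, hφ, commHom]
    constructor
    · intro h; exact congrArg Subtype.val h
    · intro h; exact Subtype.ext h
  haveI : ∀ x : G, (Cx x).FiniteIndex := fun x => by
    haveI : Finite (φ x).range := Subtype.finite
    exact Subgroup.finiteIndex_ker (φ x)
  -- key lemma: every finite-index subgroup contains a non-commuting pair
  have key : ∀ H : Subgroup G, H.FiniteIndex →
      ∃ d e : G, d ∈ H ∧ e ∈ H ∧ ⁅d, e⁆ ≠ 1 := by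
    intro H hfi
    by_contra hab
    push_neg at hab
    haveI := hfi
    haveI : Finite (G ⧸ H) := Subgroup.finite_quotient_of_finiteIndex (H := H)
    have hKfi : (H ⊓ ⨅ q : G ⧸ H, Cx q.out).FiniteIndex := by
      haveI : (⨅ q : G ⧸ H, Cx q.out).FiniteIndex :=
        Subgroup.finiteIndex_iInf (fun q => inferInstance)
      infer_instance
    have hle : (H ⊓ ⨅ q : G ⧸ H, Cx q.out) ≤ Subgroup.center G := by
      intro k hk
      rw [Subgroup.mem_inf, Subgroup.mem_iInf] at hk
      obtain ⟨hkH, hkC⟩ := hk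
      rw [Subgroup.mem_center_iff]
      intro g
      obtain ⟨h, hh⟩ := QuotientGroup.mk_out_eq_mul H g
      have hout : Commute k ((QuotientGroup.mk g : G ⧸ H).out) := by
        have := (hCx _ k).mp (hkC (QuotientGroup.mk g))
        exact commutatorElement_eq_one_iff_commute.mp this
      have hkh : Commute k (h : G) := by
        have := hab k (h : G) hkH h.2
        exact commutatorElement_eq_one_iff_commute.mp this
      have : Commute k g := by
        have : Commute k (g * (h : G)) := hh ▸ hout
        have := this.mul_right hkh.inv_right
        simpa using this
      exact this.symm.eq
    haveI : (Subgroup.center G).FiniteIndex := Subgroup.finiteIndex_of_le hle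
    exact absurd (Subgroup.finite_quotient_of_finiteIndex (H := Subgroup.center G)) (not_finite_iff_infinite.mpr hinf)
  -- the subgroup of elements commuting with everything in a list of pairs
  set Hl : List (G × G) → Subgroup G :=
    fun l => l.foldr (fun z S => (Cx z.1 ⊓ Cx z.2) ⊓ S) ⊤ with hHldef
  have hHlfi : ∀ l, (Hl l).FiniteIndex := by
    intro l
    induction l with
    | nil =>
      show (⊤ : Subgroup G).FiniteIndex
      infer_instance
    | cons a l ih =>
      show ((Cx a.1 ⊓ Cx a.2) ⊓ Hl l).FiniteIndex
      haveI := ih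
      infer_instance
  have hHlmem : ∀ l (g : G), g ∈ Hl l → ∀ z ∈ l, ⁅g, z.1⁆ = 1 ∧ ⁅g, z.2⁆ = 1 := by
    intro l
    induction l with
    | nil => intro g _ z hz; exact absurd hz List.not_mem_nil
    | cons a l ih =>
      intro g hg z hz
      obtain ⟨⟨h1, h2⟩, h3⟩ := hg
      rcases List.mem_cons.mp hz with h | h
      · subst h; exact ⟨(hCx _ _).mp h1, (hCx _ _).mp h2⟩
      · exact ih g h3 z h
  have exStep : ∀ l : List (G × G),
      ∃ z : G × G, z.1 ∈ Hl l ∧ z.2 ∈ Hl l ∧ ⁅z.1, z.2⁆ ≠ 1 := by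
    intro l
    obtain ⟨d, e, hd, he, hne⟩ := key (Hl l) (hHlfi l)
    exact ⟨(d, e), hd, he, hne⟩
  choose step h1 h2 h3 using exStep
  set seq : ℕ → List (G × G) := fun n => Nat.rec [] (fun _ l => l ++ [step l]) n with hseqdef
  set f : ℕ → G × G := fun n => step (seq n) with hfdef
  have hseq : ∀ n, seq (n + 1) = seq n ++ [f n] := fun n => rfl
  have hmemseq : ∀ i j, i < j → f i ∈ seq j := by
    intro i j hij
    induction j with
    | zero => omega
    | succ j ih =>
      rw [hseq]
      rcases Nat.lt_succ_iff_lt_or_eq.mp hij with h | h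
      · exact List.mem_append_left _ (ih h)
      · subst h; exact List.mem_append_right _ (List.mem_singleton_self _)
  -- cross commutation for i < j
  have cross : ∀ i j, i < j →
      ⁅(f j).1, (f i).1⁆ = 1 ∧ ⁅(f j).1, (f i).2⁆ = 1 ∧
      ⁅(f j).2, (f i).1⁆ = 1 ∧ ⁅(f j).2, (f i).2⁆ = 1 := by
    intro i j hij
    have hm := hmemseq i j hij
    have ha := hHlmem (seq j) (f j).1 (h1 (seq j)) (f i) hm
    have hb := hHlmem (seq j) (f j).2 (h2 (seq j)) (f i) hm
    exact ⟨ha.1, ha.2, hb.1, hb.2⟩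
  -- pigeonhole on commutator values
  set cF : ℕ → P := fun n => ⟨⁅(f n).1, (f n).2⁆, hmem _ _⟩ with hcFdef
  obtain ⟨y, hy⟩ := Finite.exists_infinite_fiber cF
  haveI := hy
  set emb := Infinite.natEmbedding ↥(cF ⁻¹' {y}) with hembdef
  set ι : ℕ → ℕ := fun n => ((emb n : ↥(cF ⁻¹' {y})) : ℕ) with hιdef
  have hιinj : Function.Injective ι := fun a b hab =>
    emb.injective (Subtype.ext hab)
  have hιval : ∀ n, cF (ι n) = y := fun n => (emb n).2
  refine ⟨(y : G), fun n => (f (ι n)).1, fun n => (f (ι n)).2, ?_, ?_, ?_⟩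
  · intro hy1
    apply h3 (seq (ι 0))
    show ⁅(f (ι 0)).1, (f (ι 0)).2⁆ = 1
    have : (cF (ι 0) : G) = (y : G) := congrArg _ (hιval 0)
    rw [hcFdef] at this
    simpa [hy1] using this
  · intro i
    have : (cF (ι i) : G) = (y : G) := congrArg _ (hιval i)
    simpa [hcFdef] using this
  · intro i j hij
    have hne : ι i ≠ ι j := fun h => hij (hιinj h)
    have symm1 : ∀ a b : G, ⁅a, b⁆ = 1 → ⁅b, a⁆ = 1 := fun a b h =>
      commutatorElement_eq_one_iff_commute.mpr
        (commutatorElement_eq_one_iff_commute.mp h).symm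
    rcases lt_or_gt_of_ne hne with h | h
    · obtain ⟨c1, c2, c3, c4⟩ := cross (ι i) (ι j) h
      exact ⟨symm1 _ _ c1, symm1 _ _ c4, symm1 _ _ c3⟩
    · obtain ⟨c1, c2, c3, c4⟩ := cross (ι j) (ι i) h
      exact ⟨c1, c4, c2⟩
end

section
/- Let G be a group with [G,G] ≤ Z(G) (nilpotent of class ≤ 2). Let c ∈ G with c ≠ 1, and let d, e : ℕ → G be sequences with ⁅d i, e i⁆ = c for all i and ⁅d i, e j⁆ = 1 for all i ≠ j. Then for every finite set T ⊆ ℕ and every i ∈ ℕ: ⁅∏_{j ∈ T} e j, d i⁆ = 1 if and only if i ∉ T. (This witnesses that the formula [y,x] = 1 has the independence property in such groups, and in particular in Th(D(1)).) -/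
open scoped commutatorElement

theorem comm_mul_aux {G : Type} [Group G]
    (hnil : commutator G ≤ Subgroup.center G) (a b x : G) :
    ⁅a * b, x⁆ = ⁅a, x⁆ * ⁅b, x⁆ := by
  have hcent : ∀ u v : G, ⁅u, v⁆ ∈ Subgroup.center G := fun u v =>
    hnil (Subgroup.commutator_mem_commutator (Subgroup.mem_top u) (Subgroup.mem_top v))
  have h1 : ∀ g : G, g * ⁅b, x⁆ = ⁅b, x⁆ * g := fun g =>
    (Subgroup.mem_center_iff.mp (hcent b x) g)
  have : ⁅a * b, x⁆ = a * ⁅b, x⁆ * a⁻¹ * ⁅a, x⁆ := by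
    simp [commutatorElement_def]; group
  rw [this, h1 a, mul_inv_cancel_right]
  exact (h1 ⁅a, x⁆).symm

/-- Witness of the independence property of the formula `[y,x] = 1` in a group of
nilpotency class ≤ 2: if `⁅d i, e i⁆ = c ≠ 1` and `⁅d i, e j⁆ = 1` for `i ≠ j`,
then for every finite `T ⊆ ℕ` and every `i`, the product of the `e j` for `j ∈ T`
(in increasing order) commutes with `d i` exactly when `i ∉ T`. -/
theorem independence_property_witness (G : Type) [Group G]
    (hnil : commutator G ≤ Subgroup.center G)
    (c : G) (hc : c ≠ 1) (d e : ℕ → G)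
    (hde : ∀ i : ℕ, ⁅d i, e i⁆ = c)
    (hij : ∀ i j : ℕ, i ≠ j → ⁅d i, e j⁆ = 1) :
    ∀ (T : Finset ℕ) (i : ℕ),
      ⁅((T.sort (· ≤ ·)).map e).prod, d i⁆ = 1 ↔ i ∉ T := by
  intro T i
  have key : ∀ l : List ℕ, l.Nodup →
      ⁅(l.map e).prod, d i⁆ = if i ∈ l then c⁻¹ else 1 := by
    intro l hl
    induction l with
    | nil => simp
    | cons j t ih =>
      have hnd := List.nodup_cons.mp hl
      rw [List.map_cons, List.prod_cons, comm_mul_aux hnil, ih hnd.2]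
      have hje : ⁅e j, d i⁆ = ⁅d i, e j⁆⁻¹ := (commutatorElement_inv _ _).symm
      by_cases hij' : i = j
      · subst hij'
        simp [hje, hde i, hnd.1]
      · rw [hje, hij i j hij']
        simp [List.mem_cons, hij']
  rw [key _ (T.sort_nodup _)]
  have hmem : i ∈ T.sort (· ≤ ·) ↔ i ∈ T := Finset.mem_sort _
  by_cases h : i ∈ T
  · simp [hmem, h, inv_eq_one, hc]
  · simp [hmem, h]
end

section
/- Let p be an odd prime. There exist a group G of exponent p with [G,G] ≤ Z(G), together with elements b : ℕ → G and arrays c, d : ℕ → ℕ → G, such that: (a) for every α and all i ≠ j, there is no x ∈ G with both ⁅x, b α⁆ = ⁅c α i, d α i⁆ and ⁅x, b α⁆ = ⁅c α j, d α j⁆; and (b) for every function f : ℕ → ℕ and every finite set s ⊆ ℕ there exists x ∈ G with ⁅x, b α⁆ = ⁅c α (f α), d α (f α)⁆ for all α ∈ s. (This is the combinatorial content of Proposition 2.1: the formula [x,y₁] = [y₂,y₃] has the tree property of the second kind in Th(D).) -/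
open scoped commutatorElement

@[ext]
structure Heis (R : Type) where
  a : R
  b : R
  c : R

namespace Heis

variable {R : Type} [CommRing R]

instance : Mul (Heis R) := ⟨fun g h => ⟨g.a + h.a, g.b + h.b, g.c + h.c + g.a * h.b⟩⟩
instance : One (Heis R) := ⟨⟨0, 0, 0⟩⟩
instance : Inv (Heis R) := ⟨fun g => ⟨-g.a, -g.b, -g.c + g.a * g.b⟩⟩

@[simp] lemma mul_a (g h : Heis R) : (g * h).a = g.a + h.a := rfl
@[simp] lemma mul_b (g h : Heis R) : (g * h).b = g.b + h.b := rfl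
@[simp] lemma mul_c (g h : Heis R) : (g * h).c = g.c + h.c + g.a * h.b := rfl
@[simp] lemma one_a : (1 : Heis R).a = 0 := rfl
@[simp] lemma one_b : (1 : Heis R).b = 0 := rfl
@[simp] lemma one_c : (1 : Heis R).c = 0 := rfl
@[simp] lemma inv_a (g : Heis R) : (g⁻¹).a = -g.a := rfl
@[simp] lemma inv_b (g : Heis R) : (g⁻¹).b = -g.b := rfl
@[simp] lemma inv_c (g : Heis R) : (g⁻¹).c = -g.c + g.a * g.b := rfl

instance : Group (Heis R) where
  mul_assoc g h k := by ext <;> simp <;> ring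
  one_mul g := by ext <;> simp
  mul_one g := by ext <;> simp
  inv_mul_cancel g := by refine Heis.ext ?_ ?_ ?_ <;> simp <;> ring

lemma comm_eq (g h : Heis R) : ⁅g, h⁆ = ⟨0, 0, g.a * h.b - h.a * g.b⟩ := by
  refine Heis.ext ?_ ?_ ?_ <;> simp [commutatorElement_def] <;> ring

lemma pow_eq (g : Heis R) (n : ℕ) :
    g ^ n = ⟨(n : R) * g.a, (n : R) * g.b, (n : R) * g.c + (n.choose 2 : R) * (g.a * g.b)⟩ := by
  induction n with
  | zero => refine Heis.ext ?_ ?_ ?_ <;> simp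
  | succ n ih =>
    rw [pow_succ, ih]
    have h2 : (n + 1).choose 2 = n.choose 2 + n := by
      rw [Nat.choose_succ_succ]
      simp [Nat.choose_one_right, Nat.add_comm]
    refine Heis.ext ?_ ?_ ?_ <;> simp [h2] <;> push_cast <;> ring

end Heis

/-- The combinatorial content of Proposition 2.1: there is a 2-nilpotent group of
exponent `p` with witnesses `b`, `c`, `d` showing that the formula
`[x,y₁] = [y₂,y₃]` has the tree property of the second kind: rows are
2-inconsistent, but every vertical path is (finitely) consistent. -/
theorem tree_property_second_kind (p : ℕ) (hp : p.Prime) (hodd : Odd p) :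
    ∃ (G : Type) (_ : Group G) (b : ℕ → G) (c d : ℕ → ℕ → G),
      (∀ g : G, g ^ p = 1) ∧
      commutator G ≤ Subgroup.center G ∧
      (∀ α i j : ℕ, i ≠ j →
        ¬ ∃ x : G, ⁅x, b α⁆ = ⁅c α i, d α i⁆ ∧ ⁅x, b α⁆ = ⁅c α j, d α j⁆) ∧
      (∀ (f : ℕ → ℕ) (s : Finset ℕ),
        ∃ x : G, ∀ α ∈ s, ⁅x, b α⁆ = ⁅c α (f α), d α (f α)⁆) := by
  haveI : Fact p.Prime := ⟨hp⟩
  let δ : ℕ × ℕ → (ℕ × ℕ → ZMod p) := fun q0 q => if q = q0 then 1 else 0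
  let row : ℕ → (ℕ × ℕ → ZMod p) := fun α q => if q.1 = α then 1 else 0
  refine ⟨Heis (ℕ × ℕ → ZMod p), inferInstance, fun α => ⟨row α, 0, 0⟩,
    fun α i => ⟨δ (α, i), 0, 0⟩, fun α i => ⟨0, -δ (α, i), 0⟩, ?_, ?_, ?_, ?_⟩
  · -- exponent p
    intro g
    have hp0 : ((p : ℕ) : ℕ × ℕ → ZMod p) = 0 := by
      funext q; simp
    have hc0 : ((p.choose 2 : ℕ) : ℕ × ℕ → ZMod p) = 0 := by
      have hplt : 2 < p := by
        rcases hodd with ⟨k, hk⟩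
        have := hp.two_le
        omega
      have hdvd : p ∣ p.choose 2 := hp.dvd_choose_self (by norm_num) hplt
      obtain ⟨k, hk⟩ := hdvd
      funext q
      simp [hk]
    rw [Heis.pow_eq, hp0, hc0]
    refine Heis.ext ?_ ?_ ?_ <;> simp
  · -- commutator ≤ center
    rw [commutator_def]
    apply Subgroup.commutator_le.mpr
    intro g _ h _
    rw [Subgroup.mem_center_iff]
    intro k
    rw [Heis.comm_eq]
    refine Heis.ext ?_ ?_ ?_ <;> simp <;> ring
  · -- rows 2-inconsistent
    rintro α i j hij ⟨x, h1, h2⟩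
    have h3 := h1.symm.trans h2
    rw [Heis.comm_eq, Heis.comm_eq] at h3
    have hc := congrArg Heis.c h3
    simp only at hc
    have h4 := congrFun hc (α, i)
    simp [δ, hij, Prod.ext_iff] at h4
  · -- paths consistent
    intro f s
    refine ⟨⟨0, fun q => if q.2 = f q.1 then 1 else 0, 0⟩, fun α _ => ?_⟩
    rw [Heis.comm_eq, Heis.comm_eq]
    refine Heis.ext rfl rfl ?_
    funext q
    rcases q with ⟨q1, q2⟩
    simp only [Pi.sub_apply, Pi.mul_apply, Pi.neg_apply, Pi.zero_apply, δ, row,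
      zero_mul, mul_zero, zero_sub, sub_zero, mul_neg]
    by_cases h1 : q1 = α <;> by_cases h2 : q2 = f q1 <;>
      simp [h1, h2, Prod.ext_iff] <;> aesop
end

section
/- Let p be a prime, let V and W be vector spaces over 𝔽_p, and let β : V × V → W be an alternating bilinear map. Let V_B be a subspace of V and a : Fin m → V a tuple. Then there exist an 𝔽_p-vector space V', an injective linear map j : V → V', an alternating bilinear map β' : V' × V' → W with β'(j x, j y) = β(x, y) for all x, y ∈ V, and a tuple e : Fin m → V' whose images in V'/j(V) are linearly independent, such that β'(e i, j x) = β(a i, x) for all i and all x ∈ V_B. (The bilinear-map kernel of the Existence property of nonforking independence for Th(D(n)).) -/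
section Aux

variable {p m : ℕ} {V W : Type} [AddCommGroup V] [Module (ZMod p) V]
  [AddCommGroup W] [Module (ZMod p) W]
  (β : V →ₗ[ZMod p] V →ₗ[ZMod p] W) (a : Fin m → V)

/-- The extended bilinear map on `V × (Fin m → ZMod p)`. -/
noncomputable def extBilin :
    (V × (Fin m → ZMod p)) →ₗ[ZMod p] (V × (Fin m → ZMod p)) →ₗ[ZMod p] W :=
  LinearMap.mk₂ (ZMod p)
    (fun v w => β v.1 w.1 + (∑ i, v.2 i • β (a i) w.1) - ∑ i, w.2 i • β (a i) v.1)
    (by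
      intro v v' w
      simp [add_smul, Finset.sum_add_distrib]
      abel)
    (by
      intro c v w
      simp [Finset.smul_sum, smul_comm c, smul_sub, smul_add, mul_smul, mul_comm c])
    (by
      intro v w w'
      simp [add_smul, Finset.sum_add_distrib]
      abel)
    (by
      intro c v w
      simp [Finset.smul_sum, smul_comm c, smul_sub, smul_add, mul_smul, mul_comm c])

@[simp] lemma extBilin_apply (v w : V × (Fin m → ZMod p)) :
    extBilin β a v w
      = β v.1 w.1 + (∑ i, v.2 i • β (a i) w.1) - ∑ i, w.2 i • β (a i) v.1 := rfl

end Aux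

/-- The bilinear-map kernel of the Existence property of nonforking independence
for `Th(D(n))`: given an alternating bilinear map `β` on `V`, a subspace `V_B` and
a tuple `a`, one can extend `V` by new vectors `e i`, linearly independent over
(the image of) `V`, so that some alternating bilinear extension `β'` of `β`
satisfies `β'(e i, x) = β(a i, x)` for all `x ∈ V_B`. -/
theorem bilinear_existence_extension (p m : ℕ) (hp : p.Prime)
    (V W : Type) [AddCommGroup V] [Module (ZMod p) V]
    [AddCommGroup W] [Module (ZMod p) W]
    (β : V →ₗ[ZMod p] V →ₗ[ZMod p] W) (halt : ∀ x : V, β x x = 0)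
    (V_B : Submodule (ZMod p) V) (a : Fin m → V) :
    ∃ (V' : Type) (_ : AddCommGroup V') (_ : Module (ZMod p) V')
      (j : V →ₗ[ZMod p] V') (β' : V' →ₗ[ZMod p] V' →ₗ[ZMod p] W) (e : Fin m → V'),
      Function.Injective j ∧
      (∀ x : V', β' x x = 0) ∧
      (∀ x y : V, β' (j x) (j y) = β x y) ∧
      LinearIndependent (ZMod p) (fun i => (LinearMap.range j).mkQ (e i)) ∧
      (∀ (i : Fin m), ∀ x ∈ V_B, β' (e i) (j x) = β (a i) x) := by
  classical
  refine ⟨V × (Fin m → ZMod p), inferInstance, inferInstance,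
    LinearMap.inl (ZMod p) V (Fin m → ZMod p), extBilin β a,
    fun i => (0, Pi.single i 1), ?_, ?_, ?_, ?_, ?_⟩
  · exact LinearMap.inl_injective
  · intro x
    simp [halt]
  · intro x y
    simp
  · -- linear independence in the quotient
    set j := LinearMap.inl (ZMod p) V (Fin m → ZMod p)
    have hle : LinearMap.range j ≤
        LinearMap.ker (LinearMap.snd (ZMod p) V (Fin m → ZMod p)) := by
      rintro _ ⟨v, rfl⟩
      simp [j]
    set F := (LinearMap.range j).liftQ
      (LinearMap.snd (ZMod p) V (Fin m → ZMod p)) hle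
    have key : LinearIndependent (ZMod p)
        (fun i : Fin m => F ((LinearMap.range j).mkQ (0, Pi.single i 1))) := by
      have : (fun i : Fin m => F ((LinearMap.range j).mkQ (0, Pi.single i 1)))
          = fun i => (Pi.single i 1 : Fin m → ZMod p) := by
        funext i
        simp [F]
      rw [this]
      have := (Pi.basisFun (ZMod p) (Fin m)).linearIndependent
      convert this using 1
      funext i
      simp [Pi.basisFun_apply]
    exact key.of_comp F
  · intro i x hx
    simp [Pi.single_apply, halt]
end

section
/- Let p be a prime, let V and W be vector spaces over 𝔽_p, and let β : V × V → W be an alternating bilinear map. Let V_M be a subspace of V, let b⁰, b¹ : Fin k → V be tuples such that the combined family (b⁰ 0, …, b⁰ (k-1), b¹ 0, …, b¹ (k-1)) is linearly independent over V_M, and let a⁰, a¹ : Fin m → V be tuples with β(a⁰ i, x) = β(a¹ i, x) for all i and all x ∈ V_M. Then there exist an 𝔽_p-vector space V', an injective linear map j : V → V', an alternating bilinear map β' : V' × V' → W with β'(j x, j y) = β(x, y) for all x, y ∈ V, and a tuple d : Fin m → V' whose images in V'/j(V) are linearly independent, such that for all i, l: β'(d i, j x) = β(a⁰ i, x) for every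 x ∈ V_M, β'(d i, j (b⁰ l)) = β(a⁰ i, b⁰ l), and β'(d i, j (b¹ l)) = β(a¹ i, b¹ l). (The bilinear-map kernel of the Independence-over-Models property of nonforking for Th(D(n)).) -/
/-- The bilinear-map kernel of the Independence-over-Models property of nonforking
for `Th(D(n))`: given tuples `b⁰`, `b¹` jointly linearly independent over `V_M` and
tuples `a⁰`, `a¹` with `β(a⁰ i, ·) = β(a¹ i, ·)` on `V_M`, one can extend `V` by
new vectors `d i`, linearly independent over the image of `V`, so that some
alternating bilinear extension `β'` of `β` agrees with `β(a⁰ i, ·)` on `V_M`, with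
`β(a⁰ i, b⁰ l)` on `b⁰`, and with `β(a¹ i, b¹ l)` on `b¹`. -/
theorem bilinear_independence_over_models (p m k : ℕ) (hp : p.Prime)
    (V W : Type) [AddCommGroup V] [Module (ZMod p) V]
    [AddCommGroup W] [Module (ZMod p) W]
    (β : V →ₗ[ZMod p] V →ₗ[ZMod p] W) (halt : ∀ x : V, β x x = 0)
    (V_M : Submodule (ZMod p) V)
    (b0 b1 : Fin k → V)
    (hb : LinearIndependent (ZMod p) (fun i : Fin k ⊕ Fin k => V_M.mkQ (Sum.elim b0 b1 i)))
    (a0 a1 : Fin m → V)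
    (ha : ∀ (i : Fin m), ∀ x ∈ V_M, β (a0 i) x = β (a1 i) x) :
    ∃ (V' : Type) (_ : AddCommGroup V') (_ : Module (ZMod p) V')
      (j : V →ₗ[ZMod p] V') (β' : V' →ₗ[ZMod p] V' →ₗ[ZMod p] W) (d : Fin m → V'),
      Function.Injective j ∧
      (∀ x : V', β' x x = 0) ∧
      (∀ x y : V, β' (j x) (j y) = β x y) ∧
      LinearIndependent (ZMod p) (fun i => (LinearMap.range j).mkQ (d i)) ∧
      (∀ (i : Fin m), ∀ x ∈ V_M, β' (d i) (j x) = β (a0 i) x) ∧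
      (∀ (i : Fin m) (l : Fin k), β' (d i) (j (b0 l)) = β (a0 i) (b0 l)) ∧
      (∀ (i : Fin m) (l : Fin k), β' (d i) (j (b1 l)) = β (a1 i) (b1 l)) := by
  haveI : Fact p.Prime := ⟨hp⟩
  classical
  set v : Fin k ⊕ Fin k → V ⧸ V_M := fun i => V_M.mkQ (Sum.elim b0 b1 i) with hv
  -- correction maps
  have hc : ∀ i : Fin m, ∃ c : (V ⧸ V_M) →ₗ[ZMod p] W,
      (∀ l, c (V_M.mkQ (b0 l)) = 0) ∧
      (∀ l, c (V_M.mkQ (b1 l)) = β (a1 i) (b1 l) - β (a0 i) (b1 l)) := by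
    intro i
    set w : Fin k ⊕ Fin k → W :=
      Sum.elim (fun _ => 0) (fun l => β (a1 i) (b1 l) - β (a0 i) (b1 l)) with hw
    obtain ⟨g, hg⟩ :=
      LinearMap.exists_extend ((Finsupp.linearCombination (ZMod p) w).comp hb.repr)
    have key : ∀ t, g (v t) = w t := by
      intro t
      have hmem : v t ∈ Submodule.span (ZMod p) (Set.range v) :=
        Submodule.subset_span ⟨t, rfl⟩
      have : g ((Submodule.span (ZMod p) (Set.range v)).subtype ⟨v t, hmem⟩) =
          Finsupp.linearCombination (ZMod p) w (hb.repr ⟨v t, hmem⟩) := by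
        rw [← LinearMap.comp_apply, hg]; rfl
      simpa [hb.repr_eq_single t ⟨v t, hmem⟩ rfl] using this
    refine ⟨g, fun l => ?_, fun l => ?_⟩
    · simpa [hv, hw] using key (Sum.inl l)
    · simpa [hv, hw] using key (Sum.inr l)
  choose c hc0 hc1 using hc
  set f : Fin m → V →ₗ[ZMod p] W := fun i => β (a0 i) + (c i).comp V_M.mkQ with hf
  have hfM : ∀ i, ∀ x ∈ V_M, f i x = β (a0 i) x := by
    intro i x hx
    have : V_M.mkQ x = 0 := by simpa [Submodule.mkQ_apply] using
      (Submodule.Quotient.mk_eq_zero V_M).mpr hx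
    simp [hf, this]
  have hf0 : ∀ i l, f i (b0 l) = β (a0 i) (b0 l) := by
    intro i l
    have h := hc0 i l
    simp only [Submodule.mkQ_apply] at h
    simp [hf, h]
  have hf1 : ∀ i l, f i (b1 l) = β (a1 i) (b1 l) := by
    intro i l
    have h := hc1 i l
    simp only [Submodule.mkQ_apply] at h
    simp [hf, h]
  have hsum : ∀ (i : Fin m) (x : V),
      (∑ i', (Pi.single i 1 : Fin m → ZMod p) i' • f i' x) = f i x := by
    intro i x
    rw [show (∑ i', (Pi.single i 1 : Fin m → ZMod p) i' • f i' x)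
        = ∑ i', if i' = i then f i' x else 0 by
      refine Finset.sum_congr rfl fun i' _ => ?_
      by_cases h : i' = i <;> simp [Pi.single_apply, h]]
    simp
  -- the new space
  refine ⟨V × (Fin m → ZMod p), inferInstance, inferInstance,
    LinearMap.inl (ZMod p) V (Fin m → ZMod p),
    LinearMap.mk₂ (ZMod p)
      (fun u z => β u.1 z.1 + (∑ i, u.2 i • f i z.1) - (∑ i, z.2 i • f i u.1))
      ?_ ?_ ?_ ?_,
    fun i => ((0 : V), (Pi.single i 1 : Fin m → ZMod p)), ?_, ?_, ?_, ?_, ?_, ?_, ?_⟩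
  · intro x y z
    simp [add_smul, Finset.sum_add_distrib, smul_add]
    abel
  · intro a x y
    simp [smul_smul, Finset.smul_sum, smul_sub, smul_add, mul_comm]
  · intro x y z
    simp [add_smul, Finset.sum_add_distrib, smul_add]
    abel
  · intro a x y
    simp [smul_smul, Finset.smul_sum, smul_sub, smul_add, mul_comm]
  · exact LinearMap.inl_injective
  · intro x; simp [halt]
  · intro x y; simp
  · rw [Fintype.linearIndependent_iff]
    intro g hg i
    have e : ∀ j' : Fin m, g j' • ((0:V), (Pi.single j' 1 : Fin m → ZMod p))
        = (((0:V), (Pi.single j' (g j') : Fin m → ZMod p))) := by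
      intro j'
      rw [Prod.smul_mk, smul_zero]
      congr 1
      ext t
      simp [Pi.single_apply]
    have h1 : (∑ j', g j' • ((0:V), (Pi.single j' 1 : Fin m → ZMod p)))
        = (((0:V), g) : V × (Fin m → ZMod p)) := by
      rw [Finset.sum_congr rfl (fun j' _ => e j'), Prod.ext_iff]
      constructor
      · rw [Prod.fst_sum]; simp
      · rw [Prod.snd_sum]; simpa using Finset.univ_sum_single g
    have h2 : (LinearMap.range (LinearMap.inl (ZMod p) V (Fin m → ZMod p))).mkQ
        (((0:V), g) : V × (Fin m → ZMod p)) = 0 := by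
      rw [← h1, map_sum]; simp only [map_smul]; simpa using hg
    rw [Submodule.mkQ_apply, Submodule.Quotient.mk_eq_zero, LinearMap.mem_range] at h2
    obtain ⟨x, hx⟩ := h2
    have hg0 : g = 0 := by simpa using (congrArg Prod.snd hx).symm
    simp [hg0]
  · intro i x hx
    simp only [LinearMap.mk₂_apply, LinearMap.inl_apply]
    simp only [hsum]
    simp [hfM i x hx]
  · intro i l
    simp only [LinearMap.mk₂_apply, LinearMap.inl_apply]
    simp only [hsum]
    simp [hf0 i l]
  · intro i l
    simp only [LinearMap.mk₂_apply, LinearMap.inl_apply]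
    simp only [hsum]
    simp [hf1 i l]
end
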